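/- arXiv:2205.03610 — 11 statements merged into one kernel-verified Lean document; each statement's English description precedes it below -/
import Mathlib

section
/- Suppose there exists α₀ ∈ V with g(α₀) < 0. Then there exists a constant C > 0 such that for every α ∈ V, the distance from α to the feasible set satisfies dist(α, F_e) ≤ C · max(g(α), 0). -/
/-- `V L = ∏_{l=0}^{L} ℂ^{2l+1}` as a complex inner ℂ product space. -/
abbrev V (L : ℕ) := PiLp 2 (fun l : Fin (L + 1) => EuclideanSpace ℂ (Fin (2 * (l : ℕ) + 1)))

/-- Coercivity: a positive-definite quadratic form dominates a multiple of `‖·‖²`. -/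
lemma coercive_aux (L : ℕ) (Yh : V L →ₗ[ℂ] V L)
    (hpd : ∀ α : V L, α ≠ 0 → 0 < (inner ℂ α (Yh α) : ℂ).re) :
    ∃ μ : ℝ, 0 < μ ∧ ∀ x : V L, μ * ‖x‖^2 ≤ (inner ℂ x (Yh x) : ℂ).re := by
  set Q : V L → ℝ := fun x => (inner ℂ x (Yh x) : ℂ).re with hQdef
  have hQcont : Continuous Q :=
    Complex.continuous_re.comp (continuous_id.inner Yh.continuous_of_finiteDimensional)
  have hne : (Metric.sphere (0 : V L) 1).Nonempty :=
    NormedSpace.sphere_nonempty.2 zero_le_one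
  obtain ⟨x₀, hx₀s, hx₀min⟩ :=
    (isCompact_sphere (0 : V L) 1).exists_isMinOn hne hQcont.continuousOn
  have hx₀norm : ‖x₀‖ = 1 := by simpa using hx₀s
  have hx₀ne : x₀ ≠ 0 := by intro h; simp [h] at hx₀norm
  refine ⟨Q x₀, hpd x₀ hx₀ne, fun x => ?_⟩
  rcases eq_or_ne x 0 with h | h
  · simp [h, hQdef]
  · have hnx : (0:ℝ) < ‖x‖ := norm_pos_iff.2 h
    set y : V L := ((‖x‖⁻¹ : ℝ) : ℂ) • x with hy
    have hyn : ‖y‖ = 1 := by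
      simp [hy, norm_smul, abs_of_pos (inv_pos.2 hnx), inv_mul_cancel₀ hnx.ne']
    have hys : y ∈ Metric.sphere (0:V L) 1 := by simp [hyn]
    have hmin := hx₀min hys
    have hxy : x = ((‖x‖ : ℝ) : ℂ) • y := by
      rw [hy, smul_smul]
      norm_cast
      rw [mul_inv_cancel₀ hnx.ne', one_smul]
    have hhom : Q x = ‖x‖^2 * Q y := by
      conv_lhs => rw [hxy]
      show (inner ℂ ((((‖x‖:ℝ)):ℂ) • y) (Yh ((((‖x‖:ℝ)):ℂ) • y)) : ℂ).re = _
      rw [map_smul, inner_smul_left, inner_smul_right, Complex.conj_ofReal, ← mul_assoc,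
        ← Complex.ofReal_mul, Complex.re_ofReal_mul]
      show ‖x‖ * ‖x‖ * Q y = _
      ring
    show Q x₀ * ‖x‖^2 ≤ Q x
    rw [hhom]
    calc Q x₀ * ‖x‖^2 ≤ Q y * ‖x‖^2 := mul_le_mul_of_nonneg_right hmin (by positivity)
    _ = ‖x‖^2 * Q y := by ring

/-- Exact convex-combination identity for the quadratic `g`. -/
lemma key_aux (L : ℕ) (Yh : V L →ₗ[ℂ] V L)
    (hsa : ∀ x y : V L, (inner ℂ (Yh x) y : ℂ) = inner ℂ x (Yh y))
    (αo : V L) (c ϱ : ℝ) (g : V L → ℝ)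
    (hg : ∀ α : V L, g α = (inner ℂ α (Yh α) : ℂ).re - 2 * (inner ℂ αo α : ℂ).re + c - ϱ)
    (s : ℝ) (u v : V L) :
    g (u + (s:ℂ) • (v - u)) =
      (1-s)*g u + s*g v - s*(1-s)*(inner ℂ (v-u) (Yh (v-u)) : ℂ).re := by
  have h1 : (inner ℂ v (Yh u) : ℂ) = starRingEnd ℂ (inner ℂ u (Yh v) : ℂ) := by
    rw [← inner_conj_symm, hsa]
  simp only [hg, map_add, map_smul, map_sub,
    inner_add_left, inner_add_right, inner_sub_left, inner_sub_right,
    inner_smul_left, inner_smul_right, h1]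
  simp only [Complex.add_re, Complex.sub_re, Complex.mul_re, Complex.conj_re,
    Complex.conj_im, Complex.ofReal_re, Complex.ofReal_im, Complex.conj_ofReal, map_sub, map_add]
  ring

set_option maxHeartbeats 1000000 in
/-- if the feasible set has a Slater point, then there is `C > 0` such that
`dist(α, F_e) ≤ C · max(g α, 0)` for every `α`. -/
theorem stmt0 (L : ℕ)
    (Yh : V L →ₗ[ℂ] V L)
    (hsa : ∀ x y : V L, (inner ℂ (Yh x) y : ℂ) = inner ℂ x (Yh y))
    (hpd : ∀ α : V L, α ≠ 0 → 0 < (inner ℂ α (Yh α) : ℂ).re)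
    (αo : V L) (c ϱ : ℝ)
    (g : V L → ℝ)
    (hg : ∀ α : V L, g α = (inner ℂ α (Yh α) : ℂ).re - 2 * (inner ℂ αo α : ℂ).re + c - ϱ)
    (hslater : ∃ α₀ : V L, g α₀ < 0) :
    ∃ C : ℝ, 0 < C ∧ ∀ α : V L,
      Metric.infDist α {a : V L | g a ≤ 0} ≤ C * max (g α) 0 := by
  obtain ⟨α₀, hα₀⟩ := hslater
  obtain ⟨μ, hμ, hco⟩ := coercive_aux L Yh hpd
  have hQnonneg : ∀ x : V L, 0 ≤ (inner ℂ x (Yh x) : ℂ).re := by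
    intro x
    rcases eq_or_ne x 0 with h | h
    · simp [h]
    · exact (hpd x h).le
  set δ : ℝ := -g α₀ with hδdef
  have hδ : 0 < δ := by rw [hδdef]; linarith
  have hα₀mem : α₀ ∈ {a : V L | g a ≤ 0} := le_of_lt hα₀
  -- lower bound on g
  have hlow : ∀ α : V L, μ * ‖α‖^2 - 2*‖αo‖*‖α‖ + (c - ϱ) ≤ g α := by
    intro α
    rw [hg]
    have h1 : (inner ℂ αo α : ℂ).re ≤ ‖αo‖ * ‖α‖ := by
      calc (inner ℂ αo α : ℂ).re ≤ ‖(inner ℂ αo α : ℂ)‖ := Complex.re_le_norm _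
      _ ≤ ‖αo‖ * ‖α‖ := norm_inner_le_norm _ _
    have h2 := hco α
    linarith
  -- far case: g dominates ‖α‖ + ‖α₀‖
  obtain ⟨R, hR1, hfar⟩ : ∃ R : ℝ, 1 ≤ R ∧ ∀ α : V L, R ≤ ‖α‖ → ‖α‖ + ‖α₀‖ ≤ g α := by
    refine ⟨(2*‖αo‖ + 1 + |c - ϱ| + ‖α₀‖)/μ + 1, ?_, ?_⟩
    · have : 0 ≤ (2*‖αo‖ + 1 + |c - ϱ| + ‖α₀‖)/μ := by positivity
      linarith
    · intro α hn
      have h1 := hlow α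
      have hnum : 0 ≤ (2*‖αo‖ + 1 + |c - ϱ| + ‖α₀‖)/μ := by positivity
      have ht1 : (1:ℝ) ≤ ‖α‖ := by linarith
      have hμR : μ * ((2*‖αo‖ + 1 + |c - ϱ| + ‖α₀‖)/μ + 1)
          = 2*‖αo‖ + 1 + |c - ϱ| + ‖α₀‖ + μ := by
        field_simp
      have key2 : μ * ((2*‖αo‖ + 1 + |c - ϱ| + ‖α₀‖)/μ + 1) * ‖α‖
          = (2*‖αo‖ + 1 + |c - ϱ| + ‖α₀‖ + μ) * ‖α‖ := by rw [hμR]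
      have habs : -(c - ϱ) ≤ |c - ϱ| := neg_le_abs _
      nlinarith [mul_nonneg (mul_nonneg hμ.le (sub_nonneg.2 hn)) (norm_nonneg α),
        mul_nonneg (sub_nonneg.2 ht1) (abs_nonneg (c - ϱ)),
        mul_nonneg (sub_nonneg.2 ht1) (norm_nonneg α₀),
        mul_nonneg (sub_nonneg.2 ht1) hμ.le]
  have hR0 : 0 ≤ R + ‖α₀‖ := by linarith [norm_nonneg α₀]
  refine ⟨1 + (R + ‖α₀‖)/δ, by positivity, fun α => ?_⟩
  rcases le_or_gt (g α) 0 with hgα | hgα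
  · have : α ∈ {a : V L | g a ≤ 0} := hgα
    rw [Metric.infDist_zero_of_mem this]
    positivity
  · have hmax : max (g α) 0 = g α := max_eq_left hgα.le
    rw [hmax]
    rcases le_or_gt R ‖α‖ with hcase | hcase
    · -- far: distance to α₀ already small compared to g α
      have h1 : Metric.infDist α {a : V L | g a ≤ 0} ≤ dist α α₀ :=
        Metric.infDist_le_dist_of_mem hα₀mem
      have h2 : dist α α₀ ≤ ‖α‖ + ‖α₀‖ := by
        rw [dist_eq_norm]
        exact (norm_sub_le _ _)
      have h3 := hfar α hcase
      have hC1 : g α ≤ (1 + (R + ‖α₀‖)/δ) * g α := by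
        nlinarith [div_nonneg hR0 hδ.le]
      linarith
    · -- near: convex combination with Slater point
      set s : ℝ := δ / (δ + g α) with hs
      have hden : 0 < δ + g α := by linarith
      have hs0 : 0 < s := div_pos hδ hden
      have hs1 : s ≤ 1 := by
        rw [hs, div_le_one hden]; linarith
      have h1s : 1 - s = g α / (δ + g α) := by
        rw [hs, eq_div_iff hden.ne', sub_mul, div_mul_cancel₀ _ hden.ne']; ring
      set β : V L := α₀ + (s:ℂ) • (α - α₀) with hβ
      have hkey := key_aux L Yh hsa αo c ϱ g hg s α₀ α
      have hβmem : β ∈ {a : V L | g a ≤ 0} := by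
        show g β ≤ 0
        rw [hβ, hkey]
        have hzero : (1-s)*g α₀ + s*g α = 0 := by
          rw [h1s, hs]
          field_simp
          ring
        have hQ := hQnonneg (α - α₀)
        nlinarith [mul_nonneg (mul_nonneg hs0.le (by linarith : (0:ℝ) ≤ 1 - s)) hQ]
      have h1 : Metric.infDist α {a : V L | g a ≤ 0} ≤ dist α β :=
        Metric.infDist_le_dist_of_mem hβmem
      have h2 : dist α β = (1 - s) * ‖α - α₀‖ := by
        rw [dist_eq_norm, hβ]
        have : α - (α₀ + (s:ℂ) • (α - α₀)) = ((1 - s : ℝ) : ℂ) • (α - α₀) := by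
          push_cast
          module
        rw [this, norm_smul, Complex.norm_real, Real.norm_eq_abs,
          abs_of_nonneg (by linarith : (0:ℝ) ≤ 1 - s)]
      have h3 : ‖α - α₀‖ ≤ R + ‖α₀‖ := by
        calc ‖α - α₀‖ ≤ ‖α‖ + ‖α₀‖ := norm_sub_le _ _
        _ ≤ R + ‖α₀‖ := by linarith
      have h4 : (1 - s) ≤ g α / δ := by
        rw [h1s]
        exact div_le_div_of_nonneg_left hgα.le hδ (by linarith)
      have h5 : dist α β ≤ (R + ‖α₀‖)/δ * g α := by
        rw [h2]
        have hba : 0 ≤ ‖α - α₀‖ := norm_nonneg _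
        have h1s' : 0 ≤ 1 - s := by linarith
        calc (1 - s) * ‖α - α₀‖ ≤ (g α / δ) * (R + ‖α₀‖) := by
              apply mul_le_mul h4 h3 hba (by positivity)
        _ = (R + ‖α₀‖)/δ * g α := by ring
      have hC : (R + ‖α₀‖)/δ * g α ≤ (1 + (R + ‖α₀‖)/δ) * g α := by
        nlinarith
      linarith
end

section
/- Let α̃ ∈ V satisfy Ŷα̃ = α° and suppose g(α̃) < 0. Let C > 0 be a constant such that dist(α, F_e) ≤ C · max(g(α), 0) for all α ∈ V, set β̄ = max_{0 ≤ l ≤ L} β_l, let ε > 0, and let λ > 0 satisfy λ ≥ C · β̄^{1/p} · (ε · (L+1)^{p/2 − 1})^{−1/p} · Φ(α̃). Then for any global minimizer α* of F_λ on V and any point α_ε ∈ F_e with ‖α* − α_ε‖ = dist(α*, F_e), the point α_ε is an ε-minimizer of the constrained problem: Φ(α_ε) ≤ Φ(α) + ε for every α ∈ F_e. -/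
lemma myRpowAdd {x y p : ℝ} (hx : 0 ≤ x) (hy : 0 ≤ y) (hp : 0 ≤ p) (hp1 : p ≤ 1) :
    (x + y) ^ p ≤ x ^ p + y ^ p := by
  lift x to NNReal using hx
  lift y to NNReal using hy
  exact_mod_cast NNReal.rpow_add_le_add_rpow x y hp hp1

lemma mySumRpow {n : ℕ} (hn : 0 < n) (y : Fin n → ℝ) (hy : ∀ i, 0 ≤ y i) {q : ℝ}
    (hq0 : 0 < q) (hq1 : q ≤ 1) :
    ∑ i, y i ^ q ≤ (n : ℝ) ^ (1 - q) * (∑ i, y i) ^ q := by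
  have hn' : (0:ℝ) < n := by exact_mod_cast hn
  have key := Real.arith_mean_le_rpow_mean (Finset.univ : Finset (Fin n))
      (fun _ => 1/(n:ℝ)) (fun i => y i ^ q) (fun i _ => by positivity)
      (by simp [Finset.sum_const, Finset.card_univ]; field_simp)
      (fun i _ => Real.rpow_nonneg (hy i) q) (p := 1/q)
      (by rw [le_div_iff₀ hq0]; linarith)
  have hyq : ∀ i : Fin n, (y i ^ q) ^ (1/q) = y i := fun i => by
    rw [← Real.rpow_mul (hy i), mul_one_div, div_self hq0.ne', Real.rpow_one]
  rw [one_div_one_div] at key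
  simp only [hyq] at key
  rw [← Finset.mul_sum, ← Finset.mul_sum] at key
  have hS : 0 ≤ ∑ i, y i := Finset.sum_nonneg fun i _ => hy i
  have key2 : (1/(n:ℝ)) * ∑ i, y i ^ q ≤ (1/(n:ℝ))^q * (∑ i, y i)^q := by
    calc (1/(n:ℝ)) * ∑ i, y i ^ q ≤ ((1/(n:ℝ)) * ∑ i, y i)^q := key
    _ = (1/(n:ℝ))^q * (∑ i, y i)^q := Real.mul_rpow (by positivity) hS
  have hmul : (n:ℝ) * (1/(n:ℝ))^q = (n:ℝ)^(1-q) := by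
    rw [one_div, Real.inv_rpow hn'.le, ← Real.rpow_neg hn'.le]
    nth_rewrite 1 [← Real.rpow_one (n:ℝ)]
    rw [← Real.rpow_add hn']
    ring_nf
  calc ∑ i, y i ^ q = (n:ℝ) * ((1/(n:ℝ)) * ∑ i, y i ^ q) := by field_simp
  _ ≤ (n:ℝ) * ((1/(n:ℝ))^q * (∑ i, y i)^q) := by
      exact mul_le_mul_of_nonneg_left key2 hn'.le
  _ = ((n:ℝ) * (1/(n:ℝ))^q) * (∑ i, y i)^q := by ring
  _ = (n:ℝ)^(1-q) * (∑ i, y i)^q := by rw [hmul]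

/-- for `λ` large enough, the projection onto the feasible set of a global
minimizer of the penalty function `F_λ` is an `ε`-minimizer of the constrained problem. -/
theorem stmt2 (L : ℕ) (p : ℝ) (hp0 : 0 < p) (hp1 : p < 1)
    (β : Fin (L + 1) → ℝ) (hβ : ∀ l, 0 < β l)
    (Φ : V L → ℝ)
    (hΦ : ∀ α : V L, Φ α = ∑ l : Fin (L + 1), β l * ‖α l‖ ^ p)
    (Yh : V L →ₗ[ℂ] V L)
    (hsa : ∀ x y : V L, (inner ℂ (Yh x) y : ℂ) = inner ℂ x (Yh y))
    (hpd : ∀ α : V L, α ≠ 0 → 0 < (inner ℂ α (Yh α) : ℂ).re)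
    (αo : V L) (c ϱ : ℝ)
    (g : V L → ℝ)
    (hg : ∀ α : V L, g α = (inner ℂ α (Yh α) : ℂ).re - 2 * (inner ℂ αo α : ℂ).re + c - ϱ)
    (αt : V L) (hαt : Yh αt = αo) (hgαt : g αt < 0)
    (C : ℝ) (hC0 : 0 < C)
    (hC : ∀ α : V L, Metric.infDist α {a : V L | g a ≤ 0} ≤ C * max (g α) 0)
    (βbar : ℝ) (hβbar : IsGreatest (Set.range β) βbar)
    (ε : ℝ) (hε : 0 < ε)
    (lam : ℝ) (hlam0 : 0 < lam)
    (hlam : C * βbar ^ (1 / p) * (ε * ((L : ℝ) + 1) ^ (p / 2 - 1)) ^ (-(1 / p)) * Φ αt ≤ lam)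
    (αs : V L)
    (hmin : ∀ α : V L, Φ αs + lam * max (g αs) 0 ≤ Φ α + lam * max (g α) 0)
    (αε : V L) (hαεfeas : g αε ≤ 0)
    (hαεproj : ‖αs - αε‖ = Metric.infDist αs {a : V L | g a ≤ 0}) :
    ∀ α : V L, g α ≤ 0 → Φ αε ≤ Φ α + ε := by
  intro α hα
  set n : ℝ := (L : ℝ) + 1 with hn_def
  have hn : (0:ℝ) < n := by positivity
  have hβle : ∀ l, β l ≤ βbar := fun l => hβbar.2 ⟨l, rfl⟩
  have hβbar0 : 0 < βbar := lt_of_lt_of_le (hβ 0) (hβle 0)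
  have hΦnonneg : ∀ x : V L, 0 ≤ Φ x := fun x => by
    rw [hΦ]
    exact Finset.sum_nonneg fun l _ =>
      mul_nonneg (hβ l).le (Real.rpow_nonneg (norm_nonneg _) p)
  set m : ℝ := max (g αs) 0 with hm_def
  have hm0 : 0 ≤ m := le_max_right _ _
  have hmaxt : max (g αt) 0 = 0 := max_eq_right hgαt.le
  have hmaxα : max (g α) 0 = 0 := max_eq_right hα
  have h1 : Φ αs + lam * m ≤ Φ αt := by
    have := hmin αt; rwa [hmaxt, mul_zero, add_zero] at this
  have hΦsα : Φ αs ≤ Φ α := by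
    have := hmin α; rw [hmaxα, mul_zero, add_zero] at this
    nlinarith [mul_nonneg hlam0.le hm0]
  have hm_le : m ≤ Φ αt / lam := by
    rw [le_div_iff₀ hlam0]
    nlinarith [hΦnonneg αs]
  set D : ℝ := ‖αs - αε‖ with hD_def
  have hD0 : 0 ≤ D := norm_nonneg _
  have hD : D ≤ C * Φ αt / lam := by
    calc D ≤ C * m := hαεproj ▸ hC αs
    _ ≤ C * (Φ αt / lam) := mul_le_mul_of_nonneg_left hm_le hC0.le
    _ = C * Φ αt / lam := (mul_div_assoc _ _ _).symm
  -- key geometric estimate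
  have hstep : Φ αε ≤ Φ αs + βbar * n ^ (1 - p/2) * D ^ p := by
    have hterm : ∀ l, β l * ‖αε l‖ ^ p ≤
        β l * ‖αs l‖ ^ p + βbar * ‖(αs - αε) l‖ ^ p := by
      intro l
      have hnorm : ‖αε l‖ ≤ ‖αs l‖ + ‖(αs - αε) l‖ := by
        have : αε l = αs l - (αs - αε) l := by simp [PiLp.sub_apply]
        rw [this]
        exact norm_sub_le _ _
      have h2 : ‖αε l‖ ^ p ≤ ‖αs l‖ ^ p + ‖(αs - αε) l‖ ^ p :=
        le_trans (Real.rpow_le_rpow (norm_nonneg _) hnorm hp0.le)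
          (myRpowAdd (norm_nonneg _) (norm_nonneg _) hp0.le hp1.le)
      calc β l * ‖αε l‖ ^ p ≤ β l * (‖αs l‖ ^ p + ‖(αs - αε) l‖ ^ p) :=
            mul_le_mul_of_nonneg_left h2 (hβ l).le
      _ = β l * ‖αs l‖ ^ p + β l * ‖(αs - αε) l‖ ^ p := by ring
      _ ≤ β l * ‖αs l‖ ^ p + βbar * ‖(αs - αε) l‖ ^ p :=
            add_le_add le_rfl (mul_le_mul_of_nonneg_right (hβle l)
              (Real.rpow_nonneg (norm_nonneg _) p))
    have hsum : ∑ l, ‖(αs - αε) l‖ ^ p ≤ n ^ (1 - p/2) * D ^ p := by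
      have h3 : ∀ l : Fin (L+1), ‖(αs - αε) l‖ ^ p = (‖(αs - αε) l‖ ^ 2) ^ (p/2) := by
        intro l
        rw [← Real.rpow_natCast_mul (norm_nonneg ((αs - αε) l)) 2 (p/2)]
        congr 1
        push_cast
        ring
      have h4 := mySumRpow (Nat.succ_pos L) (fun l => ‖(αs - αε) l‖ ^ 2)
        (fun l => sq_nonneg _) (q := p/2) (by positivity) (by linarith)
      have h5 : (∑ l, ‖(αs - αε) l‖ ^ 2) = D ^ 2 :=
        (PiLp.norm_sq_eq_of_L2 _ (αs - αε)).symm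
      have h6 : (D ^ 2 : ℝ) ^ (p/2) = D ^ p := by
        rw [← Real.rpow_natCast_mul hD0 2 (p/2)]
        congr 1
        push_cast
        ring
      simp only [h3]
      calc ∑ l, (‖(αs - αε) l‖ ^ 2) ^ (p/2)
          ≤ ((L:ℝ)+1) ^ (1 - p/2) * (∑ l, ‖(αs - αε) l‖ ^ 2) ^ (p/2) := by
            exact_mod_cast h4
      _ = n ^ (1 - p/2) * D ^ p := by rw [h5, h6]
    calc Φ αε = ∑ l, β l * ‖αε l‖ ^ p := hΦ αε
    _ ≤ ∑ l, (β l * ‖αs l‖ ^ p + βbar * ‖(αs - αε) l‖ ^ p) :=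
        Finset.sum_le_sum fun l _ => hterm l
    _ = (∑ l, β l * ‖αs l‖ ^ p) + βbar * ∑ l, ‖(αs - αε) l‖ ^ p := by
        rw [Finset.sum_add_distrib, Finset.mul_sum]
    _ ≤ Φ αs + βbar * (n ^ (1 - p/2) * D ^ p) := by
        rw [hΦ αs]
        gcongr
    _ = Φ αs + βbar * n ^ (1 - p/2) * D ^ p := by ring
  -- the penalty bound
  have hT : βbar * n ^ (1 - p/2) * D ^ p ≤ ε := by
    rcases eq_or_lt_of_le (hΦnonneg αt) with hΦt0 | hΦt0
    · -- Φ αt = 0, so D = 0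
      have hD0' : D = 0 := le_antisymm (by rw [← hΦt0] at hD; simpa using hD) hD0
      rw [hD0', Real.zero_rpow hp0.ne', mul_zero]
      exact hε.le
    · set A : ℝ := ε * n ^ (p/2 - 1) with hA_def
      have hA : 0 < A := mul_pos hε (Real.rpow_pos_of_pos hn _)
      set K : ℝ := C * βbar ^ (1/p) * A ^ (-(1/p)) * Φ αt with hK_def
      have hK : 0 < K :=
        mul_pos (mul_pos (mul_pos hC0 (Real.rpow_pos_of_pos hβbar0 _))
          (Real.rpow_pos_of_pos hA _)) hΦt0
      have hKlam : K ≤ lam := hlam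
      have hb1 : (0:ℝ) < βbar ^ (1/p) := Real.rpow_pos_of_pos hβbar0 _
      have hb2 : (0:ℝ) < A ^ (1/p) := Real.rpow_pos_of_pos hA _
      have hquot : C * Φ αt / K = βbar ^ (-(1/p)) * A ^ (1/p) := by
        rw [hK_def, Real.rpow_neg hA.le, Real.rpow_neg hβbar0.le]
        have h1 : βbar ^ (1/p) ≠ 0 := hb1.ne'
        have h2 : A ^ (1/p) ≠ 0 := hb2.ne'
        field_simp
      have hpow : (C * Φ αt / K) ^ p = βbar⁻¹ * A := by
        rw [hquot, Real.mul_rpow (Real.rpow_nonneg hβbar0.le _) (Real.rpow_nonneg hA.le _),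
          ← Real.rpow_mul hβbar0.le, ← Real.rpow_mul hA.le]
        rw [show -(1/p) * p = -1 by field_simp, show (1/p) * p = 1 by field_simp]
        rw [Real.rpow_neg_one, Real.rpow_one]
      have hDle : D ≤ C * Φ αt / K := by
        calc D ≤ C * Φ αt / lam := hD
        _ ≤ C * Φ αt / K :=
          div_le_div_of_nonneg_left (mul_nonneg hC0.le (hΦnonneg αt)) hK hKlam
      have hDp : D ^ p ≤ βbar⁻¹ * A := by
        rw [← hpow]
        exact Real.rpow_le_rpow hD0 hDle hp0.le
      calc βbar * n ^ (1 - p/2) * D ^ p ≤ βbar * n ^ (1 - p/2) * (βbar⁻¹ * A) := by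
            gcongr
      _ = (βbar * βbar⁻¹) * (n ^ (1 - p/2) * n ^ (p/2 - 1)) * ε := by
            rw [hA_def]; ring
      _ = ε := by
            rw [mul_inv_cancel₀ hβbar0.ne', ← Real.rpow_add hn]
            norm_num
  linarith [hstep, hΦsα, hT]
end

section
/- Let λ > 0. If α* ∈ V is a local minimizer of the penalty function F_λ on V, then α* is a scaled first-order stationary point of the penalty problem: there exists ξ ∈ ℝ such that p·β_l·‖α*_l‖^p·α*_l + 2λξ·‖α*_l‖²·(Ŷα* − α°)_l = 0 for every l ∈ {0,…,L}, where ξ = 0 if g(α*) < 0, ξ ∈ [0,1] if g(α*) = 0, and ξ = 1 if g(α*) > 0. -/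
open Filter Topology

section aux
variable {E : Type*} [NormedAddCommGroup E] [InnerProductSpace ℂ E]

lemma re_inner_comm (x z : E) : (inner ℂ x z : ℂ).re = (inner ℂ z x : ℂ).re := by
  simpa using inner_re_symm (𝕜 := ℂ) x z

lemma re_inner_smul_left (t : ℝ) (x z : E) :
    (inner ℂ (t • x) z : ℂ).re = t * (inner ℂ x z : ℂ).re := by
  rw [RCLike.real_smul_eq_coe_smul (K := ℂ) t x, inner_smul_left]
  simp [Complex.mul_re]

lemma re_inner_self (x : E) : (inner ℂ x x : ℂ).re = ‖x‖ ^ 2 := by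
  simpa using inner_self_eq_norm_sq (𝕜 := ℂ) x

lemma re_inner_all_zero (z : E) (h : ∀ v : E, (inner ℂ z v : ℂ).re = 0) : z = 0 := by
  have h2 := h z
  rw [re_inner_self] at h2
  exact norm_eq_zero.mp ((pow_eq_zero_iff two_ne_zero).mp h2)

lemma hasDerivAt_quadratic (a b c : ℝ) :
    HasDerivAt (fun t : ℝ => a + b * t + c * t ^ 2) b 0 := by
  have h1 : HasDerivAt (fun t : ℝ => b * t) b 0 := by
    simpa using (hasDerivAt_id (0 : ℝ)).const_mul b
  have h2 : HasDerivAt (fun t : ℝ => c * t ^ 2) 0 0 := by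
    simpa using (hasDerivAt_pow 2 (0 : ℝ)).const_mul c
  have := (h1.const_add a).add h2
  rw [add_zero] at this
  exact this

lemma myHasDerivAt_norm_rpow {p : ℝ} (hp : 0 < p) (x w : E) (hx : x ≠ 0) :
    HasDerivAt (fun t : ℝ => ‖x + t • w‖ ^ p)
      (p * ‖x‖ ^ (p - 2) * (inner ℂ x w : ℂ).re) 0 := by
  have hxn : (0 : ℝ) < ‖x‖ := norm_pos_iff.mpr hx
  have hq : ∀ t : ℝ, ‖x + t • w‖ ^ p
      = (‖x‖ ^ 2 + 2 * (inner ℂ x w : ℂ).re * t + ‖w‖ ^ 2 * t ^ 2) ^ (p / 2) := by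
    intro t
    have h2 : ‖x + t • w‖ ^ (2 : ℕ)
        = ‖x‖ ^ 2 + 2 * (inner ℂ x w : ℂ).re * t + ‖w‖ ^ 2 * t ^ 2 := by
      have h := norm_add_sq (𝕜 := ℂ) x (t • w)
      have hin : (inner ℂ x (t • w) : ℂ) = (t : ℂ) * inner ℂ x w := by
        rw [RCLike.real_smul_eq_coe_smul (K := ℂ) t w]; exact inner_smul_right _ _ _
      rw [h, hin]
      simp [Complex.mul_re, norm_smul, mul_pow]
      ring
    have hnn : (0 : ℝ) ≤ ‖x + t • w‖ := norm_nonneg _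
    rw [← h2]
    rw [← Real.rpow_natCast (‖x + t • w‖) 2, ← Real.rpow_mul hnn]
    norm_num
    congr 1
    ring
  have hpoly := hasDerivAt_quadratic (‖x‖ ^ 2) (2 * (inner ℂ x w : ℂ).re) (‖w‖ ^ 2)
  have hq0 : (0:ℝ) < ‖x‖ ^ 2 + 2 * (inner ℂ x w : ℂ).re * 0 + ‖w‖ ^ 2 * 0 ^ 2 := by
    simpa using pow_pos hxn 2
  have hr := hpoly.rpow_const (p := p / 2) (Or.inl hq0.ne')
  simp only [hq]
  convert hr using 1
  have h3 : (‖x‖ ^ 2 + 2 * (inner ℂ x w : ℂ).re * 0 + ‖w‖ ^ 2 * 0 ^ 2) = ‖x‖ ^ 2 := by ring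
  rw [h3]
  have h4 : ((‖x‖ ^ 2 : ℝ)) ^ (p / 2 - 1) = ‖x‖ ^ (p - 2) := by
    rw [← Real.rpow_natCast ‖x‖ 2, ← Real.rpow_mul hxn.le]
    norm_num
    congr 1
    ring
  rw [h4]; ring

lemma hpow_split {p : ℝ} (r : ℝ) (hr : 0 < r) : r ^ p = r ^ (p - 2) * r ^ 2 := by
  rw [← Real.rpow_natCast r 2, ← Real.rpow_add hr]
  norm_num

end aux

set_option maxHeartbeats 3200000 in
/-- a local minimizer of the penalty function `F_λ` is a scaled first-order
stationary point of the penalty problem. -/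
theorem stmt3 (L : ℕ) (p : ℝ) (hp0 : 0 < p) (hp1 : p < 1)
    (β : Fin (L + 1) → ℝ) (hβ : ∀ l, 0 < β l)
    (Φ : V L → ℝ)
    (hΦ : ∀ α : V L, Φ α = ∑ l : Fin (L + 1), β l * ‖α l‖ ^ p)
    (Yh : V L →ₗ[ℂ] V L)
    (hsa : ∀ x y : V L, (inner ℂ (Yh x) y : ℂ) = inner ℂ x (Yh y))
    (hpd : ∀ α : V L, α ≠ 0 → 0 < (inner ℂ α (Yh α) : ℂ).re)
    (αo : V L) (c ϱ : ℝ)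
    (g : V L → ℝ)
    (hg : ∀ α : V L, g α = (inner ℂ α (Yh α) : ℂ).re - 2 * (inner ℂ αo α : ℂ).re + c - ϱ)
    (lam : ℝ) (hlam : 0 < lam)
    (αs : V L)
    (hloc : ∃ N ∈ nhds αs, ∀ α ∈ N,
      Φ αs + lam * max (g αs) 0 ≤ Φ α + lam * max (g α) 0) :
    ∃ ξ : ℝ,
      (g αs < 0 → ξ = 0) ∧
      (g αs = 0 → ξ ∈ Set.Icc (0 : ℝ) 1) ∧
      (0 < g αs → ξ = 1) ∧
      ∀ l : Fin (L + 1),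
        (p * β l * ‖αs l‖ ^ p) • αs l
          + (2 * lam * ξ * ‖αs l‖ ^ 2) • ((Yh αs - αo) l) = 0 := by
  classical
  obtain ⟨N, hN, hNmin⟩ := hloc
  set y : V L := Yh αs - αo with hy
  set u : V L := WithLp.toLp 2 (fun l => (p * β l * ‖αs l‖ ^ (p - 2)) • αs l :
      ∀ l : Fin (L + 1), EuclideanSpace ℂ (Fin (2 * (l : ℕ) + 1))) with hu
  have hul : ∀ l, u l = (p * β l * ‖αs l‖ ^ (p - 2)) • αs l := fun l => rfl
  have happ : ∀ (d : V L) (t : ℝ) (l), (αs + t • d) l = αs l + t • d l := fun d t l => rfl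
  -- derivative of Φ along admissible directions
  have hPhiD : ∀ d : V L, (∀ l, αs l = 0 → d l = 0) →
      HasDerivAt (fun t : ℝ => Φ (αs + t • d)) ((inner ℂ u d : ℂ).re) 0 := by
    intro d hd
    have hsum : HasDerivAt (fun t : ℝ => ∑ l : Fin (L + 1), β l * ‖αs l + t • d l‖ ^ p)
        (∑ l : Fin (L + 1), p * β l * ‖αs l‖ ^ (p - 2) * (inner ℂ (αs l) (d l) : ℂ).re) 0 := by
      apply HasDerivAt.fun_sum
      intro l _
      by_cases hl : αs l = 0
      · have hdl := hd l hl
        simpa [hl, hdl] using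
          hasDerivAt_const (0 : ℝ) (β l * ‖(0 : EuclideanSpace ℂ (Fin (2 * (l : ℕ) + 1)))‖ ^ p)
      · have := (myHasDerivAt_norm_rpow hp0 (αs l) (d l) hl).const_mul (β l)
        convert this using 1
        · rfl
        ring
    have hfun : (fun t : ℝ => Φ (αs + t • d))
        = fun t : ℝ => ∑ l : Fin (L + 1), β l * ‖αs l + t • d l‖ ^ p := by
      funext t
      rw [hΦ]
      exact Finset.sum_congr rfl fun l _ => by rw [happ d t l]
    have hval : (inner ℂ u d : ℂ).re
        = ∑ l : Fin (L + 1), p * β l * ‖αs l‖ ^ (p - 2) * (inner ℂ (αs l) (d l) : ℂ).re := by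
      rw [PiLp.inner_apply, Complex.re_sum]
      refine Finset.sum_congr rfl fun l _ => ?_
      rw [hul l, re_inner_smul_left]
      try ring
    rw [hfun, hval]
    try exact hsum
  -- expansion of g along lines
  have hgline : ∀ (d : V L) (t : ℝ), g (αs + t • d)
      = g αs + 2 * (inner ℂ d y : ℂ).re * t + (inner ℂ d (Yh d) : ℂ).re * t ^ 2 := by
    intro d t
    have hsm : ∀ v : V L, t • v = ((t : ℂ)) • v := fun v =>
      RCLike.real_smul_eq_coe_smul (K := ℂ) t v
    have hYd : Yh (αs + t • d) = Yh αs + (t : ℂ) • Yh d := by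
      rw [hsm, map_add, map_smul]
    have hcross : (inner ℂ αs (Yh d) : ℂ).re = (inner ℂ d (Yh αs) : ℂ).re := by
      rw [re_inner_comm, hsa]
    have hao : (inner ℂ d αo : ℂ).re = (inner ℂ αo d : ℂ).re := re_inner_comm _ _
    rw [hg, hg, hYd, hsm d, hy]
    simp only [inner_add_left, inner_add_right, inner_smul_left, inner_smul_right,
      inner_sub_right, Complex.add_re, Complex.sub_re, Complex.mul_re,
      Complex.conj_re, Complex.conj_im, Complex.ofReal_re, Complex.ofReal_im,
      RingHom.id_apply, starRingEnd_apply]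
    simp only [Complex.star_def, Complex.conj_re, Complex.conj_im, Complex.ofReal_re,
      Complex.ofReal_im]
    rw [← hcross, ← hao]
    ring_nf
  -- eventual inequality along lines
  have hFev : ∀ d : V L, ∀ᶠ t : ℝ in 𝓝 0,
      Φ αs + lam * max (g αs) 0 ≤ Φ (αs + t • d) + lam * max (g (αs + t • d)) 0 := by
    intro d
    have hcont : Filter.Tendsto (fun t : ℝ => αs + t • d) (𝓝 0) (𝓝 αs) := by
      have hc : Continuous fun t : ℝ => αs + t • d :=
        continuous_const.add (continuous_id.smul continuous_const)
      have := hc.tendsto 0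
      simpa using this
    filter_upwards [hcont.eventually_mem hN] with t ht
    exact hNmin _ ht
  -- scalar identity
  have hsc : ∀ l, αs l ≠ 0 →
      (p * β l * ‖αs l‖ ^ p) • αs l = (‖αs l‖ ^ 2 : ℝ) • u l := by
    intro l hl
    rw [hul l, smul_smul, hpow_split (‖αs l‖) (norm_pos_iff.mpr hl)]
    ring_nf
  have husq : ∀ z : V L, (∀ v : V L, (inner ℂ z v : ℂ).re = 0) → z = 0 := by
    intro z hz
    have h := hz z
    rw [re_inner_self] at h
    exact norm_eq_zero.mp ((pow_eq_zero_iff two_ne_zero).mp h)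
  rcases lt_trichotomy (g αs) 0 with hgs | hgs | hgs
  · -- g αs < 0 : αs must be 0
    have hD0 : ∀ d : V L, (∀ l, αs l = 0 → d l = 0) → (inner ℂ u d : ℂ).re = 0 := by
      intro d hd
      have hneg : ∀ᶠ t : ℝ in 𝓝 0, g (αs + t • d) < 0 := by
        have hc : Continuous fun t : ℝ =>
            g αs + 2 * (inner ℂ d y : ℂ).re * t + (inner ℂ d (Yh d) : ℂ).re * t ^ 2 :=
          (continuous_const.add (continuous_const.mul continuous_id)).add
            (continuous_const.mul (continuous_pow 2))
        have h0 : Filter.Tendsto (fun t : ℝ =>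
            g αs + 2 * (inner ℂ d y : ℂ).re * t + (inner ℂ d (Yh d) : ℂ).re * t ^ 2)
            (𝓝 0) (𝓝 (g αs)) := by
          have := hc.tendsto 0
          simpa using this
        filter_upwards [h0.eventually_lt_const hgs] with t ht
        rw [hgline d t]
        exact ht
      have hmin : IsLocalMin (fun t : ℝ => Φ (αs + t • d)) 0 := by
        filter_upwards [hFev d, hneg] with t hle hlt
        have h1 : max (g (αs + t • d)) 0 = 0 := max_eq_right hlt.le
        have h2 : max (g αs) 0 = 0 := max_eq_right hgs.le
        have : Φ αs ≤ Φ (αs + t • d) := by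
          rw [h1, h2] at hle
          simpa using hle
        simpa using this
      exact hmin.hasDerivAt_eq_zero (hPhiD d hd)
    have hu0 : u = 0 := by
      have h := hD0 u (fun l hl => by rw [hul l, hl, smul_zero])
      rw [re_inner_self] at h
      exact norm_eq_zero.mp ((pow_eq_zero_iff two_ne_zero).mp h)
    have hαs0 : ∀ l, αs l = 0 := by
      intro l
      by_contra hl
      have h0 : u l = 0 := by rw [hu0]; rfl
      rw [hul l] at h0
      rcases smul_eq_zero.mp h0 with hc | hc
      · have hcpos : 0 < p * β l * ‖αs l‖ ^ (p - 2) :=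
          mul_pos (mul_pos hp0 (hβ l)) (Real.rpow_pos_of_pos (norm_pos_iff.mpr hl) _)
        exact hcpos.ne' hc
      · exact hl hc
    refine ⟨0, fun _ => rfl, fun _ => ⟨le_refl 0, zero_le_one⟩,
      fun h => absurd (h.trans hgs) (lt_irrefl 0), ?_⟩
    intro l
    simp [hαs0 l]
  · -- g αs = 0
    have hKey : ∀ d : V L, (∀ l, αs l = 0 → d l = 0) →
        0 ≤ (inner ℂ u d : ℂ).re + lam * max (2 * (inner ℂ d y : ℂ).re) 0 := by
      intro d hd
      have hΦd := hPhiD d hd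
      have hslope : Filter.Tendsto
          (fun t : ℝ => t⁻¹ * (Φ (αs + t • d) - Φ αs)) (𝓝[>] 0)
          (𝓝 ((inner ℂ u d : ℂ).re)) := by
        have h := hΦd.tendsto_slope_zero_right
        simp only [zero_add, smul_eq_mul, zero_smul, add_zero] at h
        exact h
      have hmax : Filter.Tendsto
          (fun t : ℝ => lam * max (2 * (inner ℂ d y : ℂ).re + (inner ℂ d (Yh d) : ℂ).re * t) 0)
          (𝓝[>] 0) (𝓝 (lam * max (2 * (inner ℂ d y : ℂ).re) 0)) := by
        have hc : Continuous fun t : ℝ =>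
            lam * max (2 * (inner ℂ d y : ℂ).re + (inner ℂ d (Yh d) : ℂ).re * t) 0 :=
          continuous_const.mul
            ((continuous_const.add (continuous_const.mul continuous_id)).max continuous_const)
        have h := hc.tendsto 0
        simp only [mul_zero, add_zero] at h
        exact h.mono_left nhdsWithin_le_nhds
      have hsum := hslope.add hmax
      refine ge_of_tendsto hsum ?_
      have hev : ∀ᶠ t : ℝ in 𝓝[>] 0,
          Φ αs + lam * max (g αs) 0 ≤ Φ (αs + t • d) + lam * max (g (αs + t • d)) 0 :=
        (hFev d).filter_mono nhdsWithin_le_nhds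
      filter_upwards [hev, self_mem_nhdsWithin] with t hle ht
      have ht0 : (0:ℝ) < t := ht
      rw [hgline d t, hgs] at hle
      simp only [max_self, mul_zero, add_zero, zero_add] at hle
      have hmm : max (2 * (inner ℂ d y : ℂ).re * t + (inner ℂ d (Yh d) : ℂ).re * t ^ 2) 0
          = t * max (2 * (inner ℂ d y : ℂ).re + (inner ℂ d (Yh d) : ℂ).re * t) 0 := by
        rw [mul_max_of_nonneg _ _ ht0.le, mul_zero]
        congr 1
        ring
      rw [hmm] at hle
      have hexp : t⁻¹ * ((Φ (αs + t • d)
            + lam * (t * max (2 * (inner ℂ d y : ℂ).re + (inner ℂ d (Yh d) : ℂ).re * t) 0)) - Φ αs)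
          = t⁻¹ * (Φ (αs + t • d) - Φ αs)
            + lam * max (2 * (inner ℂ d y : ℂ).re + (inner ℂ d (Yh d) : ℂ).re * t) 0 := by
        field_simp
        ring
      have hg0 : 0 ≤ t⁻¹ * ((Φ (αs + t • d)
            + lam * (t * max (2 * (inner ℂ d y : ℂ).re + (inner ℂ d (Yh d) : ℂ).re * t) 0)) - Φ αs) :=
        mul_nonneg (inv_nonneg.mpr ht0.le) (by linarith)
      rw [hexp] at hg0
      exact hg0
    obtain ⟨yS, hySl⟩ : ∃ yS : V L, ∀ l, yS l = if αs l = 0 then 0 else y l :=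
      ⟨(WithLp.equiv 2 _).symm (fun l => if αs l = 0 then 0 else y l), fun l => rfl⟩
    have hyS_S : ∀ l, αs l = 0 → yS l = 0 := fun l hl => by rw [hySl l, if_pos hl]
    have hu_S : ∀ l, αs l = 0 → u l = 0 := fun l hl => by rw [hul l, hl, smul_zero]
    have hKey' : ∀ d : V L, (∀ l, αs l = 0 → d l = 0) →
        0 ≤ (inner ℂ u d : ℂ).re + lam * max (2 * (inner ℂ d yS : ℂ).re) 0 := by
      intro d hd
      have hswap : (inner ℂ d y : ℂ) = inner ℂ d yS := by
        rw [PiLp.inner_apply, PiLp.inner_apply]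
        refine Finset.sum_congr rfl fun l _ => ?_
        by_cases hl : αs l = 0
        · rw [hd l hl, inner_zero_left, inner_zero_left]
        · rw [hySl l, if_neg hl]
      have h := hKey d hd
      rw [hswap] at h
      exact h
    by_cases hyS0 : yS = 0
    · have hu0 : u = 0 := by
        have h1 := hKey' (-u) (fun l hl => by
          have e : (-u) l = -(u l) := rfl
          rw [e, hu_S l hl, neg_zero])
        rw [hyS0] at h1
        rw [inner_zero_right, inner_neg_right] at h1
        simp only [Complex.zero_re, mul_zero, max_self, Complex.neg_re, re_inner_self] at h1
        have h2 : ‖u‖ ^ 2 = 0 :=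
          le_antisymm (by linarith) (by positivity)
        exact norm_eq_zero.mp ((pow_eq_zero_iff two_ne_zero).mp h2)
      refine ⟨0, fun _ => rfl, fun _ => ⟨le_refl 0, zero_le_one⟩,
        fun h => absurd hgs h.ne', ?_⟩
      intro l
      by_cases hl : αs l = 0
      · simp [hl]
      · have h3 : u l = 0 := by rw [hu0]; rfl
        rw [hsc l hl, h3, smul_zero]
        simp
    · have hySnorm : (0:ℝ) < ‖yS‖ ^ 2 := by
        have := norm_pos_iff.mpr hyS0
        positivity
      set μ : ℝ := (inner ℂ u yS : ℂ).re / ‖yS‖ ^ 2 with hμdef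
      obtain ⟨w, hwdef⟩ : ∃ w : V L, w = u - μ • yS := ⟨_, rfl⟩
      have hw_S : ∀ l, αs l = 0 → w l = 0 := by
        intro l hl
        have e : w l = u l - μ • yS l := by rw [hwdef]; rfl
        rw [e, hu_S l hl, hyS_S l hl, smul_zero, sub_zero]
      have hwyS : (inner ℂ w yS : ℂ).re = 0 := by
        rw [hwdef, inner_sub_left, Complex.sub_re, re_inner_smul_left, re_inner_self, hμdef]
        field_simp
        ring
      have h1 := hKey' w hw_S
      have h2 := hKey' (-w) (fun l hl => by
        have e : (-w) l = -(w l) := rfl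
        rw [e, hw_S l hl, neg_zero])
      rw [hwyS] at h1
      simp only [mul_zero, max_self, add_zero] at h1
      rw [inner_neg_left, Complex.neg_re, hwyS, neg_zero, inner_neg_right, Complex.neg_re] at h2
      simp only [mul_zero, max_self, add_zero] at h2
      have huw : (inner ℂ u w : ℂ).re = 0 := le_antisymm (by linarith) h1
      have hueq' : u = w + μ • yS := by rw [hwdef, sub_add_cancel]
      have huexp : (inner ℂ u w : ℂ).re = ‖w‖ ^ 2 + μ * (inner ℂ yS w : ℂ).re := by
        nth_rewrite 1 [hueq']
        rw [inner_add_left, Complex.add_re, re_inner_smul_left, re_inner_self]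
      have hySw : (inner ℂ yS w : ℂ).re = 0 := by rw [re_inner_comm]; exact hwyS
      rw [hySw, mul_zero, add_zero, huw] at huexp
      have hw0 : w = 0 := norm_eq_zero.mp ((pow_eq_zero_iff two_ne_zero).mp huexp.symm)
      have hueq : u = μ • yS := by rw [hueq', hw0, zero_add]
      have h3 := hKey' yS hyS_S
      have h4 := hKey' (-yS) (fun l hl => by
        have e : (-yS) l = -(yS l) := rfl
        rw [e, hyS_S l hl, neg_zero])
      rw [hueq, re_inner_smul_left, re_inner_self] at h3
      rw [max_eq_left (by positivity)] at h3
      rw [hueq, inner_neg_right, Complex.neg_re, re_inner_smul_left, re_inner_self,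
        inner_neg_left, Complex.neg_re, re_inner_self] at h4
      rw [max_eq_right (by nlinarith)] at h4
      have hμle : μ ≤ 0 := by nlinarith
      have hμge : -(2 * lam) ≤ μ := by nlinarith
      refine ⟨-μ / (2 * lam), fun h => absurd hgs h.ne, fun _ => ⟨?_, ?_⟩,
        fun h => absurd hgs h.ne', ?_⟩
      · exact div_nonneg (neg_nonneg.mpr hμle) (by positivity)
      · rw [div_le_one (by positivity)]
        linarith
      intro l
      by_cases hl : αs l = 0
      · simp [hl]
      · have hulμ : u l = μ • y l := by
          have e : u l = μ • yS l := by rw [hueq]; rfl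
          rw [e, hySl l, if_neg hl]
        rw [hsc l hl, hulμ, smul_smul, ← add_smul]
        have hs0 : ‖αs l‖ ^ 2 * μ + 2 * lam * (-μ / (2 * lam)) * ‖αs l‖ ^ 2 = 0 := by
          field_simp
          ring
        rw [hs0, zero_smul]
  · -- 0 < g αs
    have hD : ∀ d : V L, (∀ l, αs l = 0 → d l = 0) →
        (inner ℂ u d : ℂ).re + lam * (2 * (inner ℂ d y : ℂ).re) = 0 := by
      intro d hd
      have hc : Continuous fun t : ℝ =>
          g αs + 2 * (inner ℂ d y : ℂ).re * t + (inner ℂ d (Yh d) : ℂ).re * t ^ 2 :=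
        (continuous_const.add (continuous_const.mul continuous_id)).add
          (continuous_const.mul (continuous_pow 2))
      have h0 : Filter.Tendsto (fun t : ℝ =>
          g αs + 2 * (inner ℂ d y : ℂ).re * t + (inner ℂ d (Yh d) : ℂ).re * t ^ 2)
          (𝓝 0) (𝓝 (g αs)) := by
        have := hc.tendsto 0
        simpa using this
      have hpos : ∀ᶠ t : ℝ in 𝓝 0, 0 < g (αs + t • d) := by
        filter_upwards [h0.eventually_const_lt hgs] with t ht
        rw [hgline d t]
        exact ht
      have hder : HasDerivAt (fun t : ℝ => Φ (αs + t • d)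
          + lam * (g αs + 2 * (inner ℂ d y : ℂ).re * t + (inner ℂ d (Yh d) : ℂ).re * t ^ 2))
          ((inner ℂ u d : ℂ).re + lam * (2 * (inner ℂ d y : ℂ).re)) 0 :=
        (hPhiD d hd).add ((hasDerivAt_quadratic _ _ _).const_mul lam)
      have hmin : IsLocalMin (fun t : ℝ => Φ (αs + t • d)
          + lam * (g αs + 2 * (inner ℂ d y : ℂ).re * t + (inner ℂ d (Yh d) : ℂ).re * t ^ 2)) 0 := by
        filter_upwards [hFev d, hpos] with t hle hlt
        have h1 : max (g (αs + t • d)) 0 = g (αs + t • d) := max_eq_left hlt.le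
        have h2 : max (g αs) 0 = g αs := max_eq_left hgs.le
        rw [h1, h2, hgline d t] at hle
        simpa using hle
      exact hmin.hasDerivAt_eq_zero hder
    refine ⟨1, fun h => absurd h (not_lt.mpr hgs.le), fun h => absurd h (ne_of_gt hgs),
      fun _ => rfl, ?_⟩
    intro l
    by_cases hl : αs l = 0
    · simp [hl]
    · have hzre : ∀ w : EuclideanSpace ℂ (Fin (2 * (l : ℕ) + 1)),
          (inner ℂ (u l) w : ℂ).re + 2 * lam * (inner ℂ w (y l) : ℂ).re = 0 := by
        intro w
        obtain ⟨d0, hd0⟩ : ∃ d0 : V L, ∀ m,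
            d0 m = Pi.single (M := fun m : Fin (L + 1) =>
              EuclideanSpace ℂ (Fin (2 * (m : ℕ) + 1))) l w m :=
          ⟨(WithLp.equiv 2 _).symm (Pi.single l w), fun m => rfl⟩
        have hdS : ∀ m, αs m = 0 → d0 m = 0 := by
          intro m hm
          rw [hd0 m]
          by_cases hml : m = l
          · subst hml; exact absurd hm hl
          · exact Pi.single_eq_of_ne hml _
        have h := hD d0 hdS
        have e1 : (inner ℂ u d0 : ℂ) = inner ℂ (u l) w := by
          rw [PiLp.inner_apply, Finset.sum_eq_single l]
          · rw [hd0 l, Pi.single_eq_same]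
          · intro m _ hml
            rw [hd0 m, Pi.single_eq_of_ne hml, inner_zero_right]
          · intro hml; exact absurd (Finset.mem_univ l) hml
        have e2 : (inner ℂ d0 y : ℂ) = inner ℂ w (y l) := by
          rw [PiLp.inner_apply, Finset.sum_eq_single l]
          · rw [hd0 l, Pi.single_eq_same]
          · intro m _ hml
            rw [hd0 m, Pi.single_eq_of_ne hml, inner_zero_left]
          · intro hml; exact absurd (Finset.mem_univ l) hml
        rw [e1, e2] at h
        linarith [h]
      set z : EuclideanSpace ℂ (Fin (2 * (l : ℕ) + 1)) := u l + (2 * lam) • y l with hz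
      have hz0 : z = 0 := by
        apply re_inner_all_zero
        intro v
        rw [hz, inner_add_left, Complex.add_re, re_inner_smul_left, re_inner_smul_left,
          re_inner_comm (y l) v]
        have h1 := hzre v
        rw [hul l, re_inner_smul_left] at h1
        linarith
      have hfin : (p * β l * ‖αs l‖ ^ p) • αs l + (2 * lam * 1 * ‖αs l‖ ^ 2) • y l
          = (‖αs l‖ ^ 2 : ℝ) • z := by
        rw [hz, smul_add, hsc l hl, smul_smul]
        have hss : (2 * lam * 1 * ‖αs l‖ ^ 2 : ℝ) = ‖αs l‖ ^ 2 * (2 * lam) := by ring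
        rw [hss, smul_smul]
      rw [hfin, hz0, smul_zero]
end

section
/- Let λ > 0 and c̃ > 0, and let α* ∈ V be a scaled first-order stationary point of the penalty problem (i.e., there exists ξ ∈ ℝ such that p·β_l·‖α*_l‖^p·α*_l + 2λξ·‖α*_l‖²·(Ŷα* − α°)_l = 0 for every l ∈ {0,…,L}, where ξ = 0 if g(α*) < 0, ξ ∈ [0,1] if g(α*) = 0, and ξ = 1 if g(α*) > 0). Suppose ‖Ŷα* − α°‖ ≤ c̃. Then for every l ∈ {0,…,L} with α*_l ≠ 0, one has ‖α*_l‖ ≥ (p·β_l/(2λc̃))^{1/(1−p)}. -/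
/-- lower bound on the norms of the nonzero groups of a scaled first-order
stationary point of the penalty problem. -/
theorem stmt4 (L : ℕ) (p : ℝ) (hp0 : 0 < p) (hp1 : p < 1)
    (β : Fin (L + 1) → ℝ) (hβ : ∀ l, 0 < β l)
    (Yh : V L →ₗ[ℂ] V L)
    (hsa : ∀ x y : V L, (inner ℂ (Yh x) y : ℂ) = inner ℂ x (Yh y))
    (hpd : ∀ α : V L, α ≠ 0 → 0 < (inner ℂ α (Yh α) : ℂ).re)
    (αo : V L) (c ϱ : ℝ)
    (g : V L → ℝ)
    (hg : ∀ α : V L, g α = (inner ℂ α (Yh α) : ℂ).re - 2 * (inner ℂ αo α : ℂ).re + c - ϱ)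
    (lam ct : ℝ) (hlam : 0 < lam) (hct : 0 < ct)
    (αs : V L) (ξ : ℝ)
    (hξ0 : g αs < 0 → ξ = 0)
    (hξmid : g αs = 0 → ξ ∈ Set.Icc (0 : ℝ) 1)
    (hξ1 : 0 < g αs → ξ = 1)
    (hstat : ∀ l : Fin (L + 1),
      (p * β l * ‖αs l‖ ^ p) • αs l
        + (2 * lam * ξ * ‖αs l‖ ^ 2) • ((Yh αs - αo) l) = 0)
    (hbound : ‖Yh αs - αo‖ ≤ ct) :
    ∀ l : Fin (L + 1), αs l ≠ 0 →
      (p * β l / (2 * lam * ct)) ^ (1 / (1 - p)) ≤ ‖αs l‖ := by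
  intro l hl
  set t := ‖αs l‖ with ht_def
  have ht : 0 < t := norm_pos_iff.mpr hl
  have hξabs : |ξ| ≤ 1 := by
    rcases lt_trichotomy (g αs) 0 with h | h | h
    · simp [hξ0 h]
    · obtain ⟨h0, h1⟩ := hξmid h
      rwa [abs_of_nonneg h0]
    · simp [hξ1 h]
  -- component norm bound
  have hyl : ‖(Yh αs - αo) l‖ ≤ ct := by
    refine le_trans ?_ hbound
    have hsq : ‖(Yh αs - αo) l‖ ^ 2 ≤ ‖Yh αs - αo‖ ^ 2 := by
      conv_rhs => rw [PiLp.norm_sq_eq_of_L2]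
      exact Finset.single_le_sum (f := fun i => ‖(Yh αs - αo) i‖ ^ 2)
        (fun i _ => sq_nonneg _) (Finset.mem_univ l)
    calc ‖(Yh αs - αo) l‖ = Real.sqrt (‖(Yh αs - αo) l‖ ^ 2) :=
          (Real.sqrt_sq (norm_nonneg _)).symm
      _ ≤ Real.sqrt (‖Yh αs - αo‖ ^ 2) := Real.sqrt_le_sqrt hsq
      _ = ‖Yh αs - αo‖ := Real.sqrt_sq (norm_nonneg _)
  have htp : (0 : ℝ) < t ^ p := Real.rpow_pos_of_pos ht p
  have ha : (0 : ℝ) < p * β l * t ^ p := mul_pos (mul_pos hp0 (hβ l)) htp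
  -- key norm equality from stationarity
  have heq : (p * β l * t ^ p) • αs l = (-(2 * lam * ξ * t ^ 2)) • ((Yh αs - αo) l) := by
    rw [neg_smul]
    exact eq_neg_of_add_eq_zero_left (hstat l)
  have hn := congrArg norm heq
  rw [norm_smul, norm_smul, Real.norm_eq_abs, Real.norm_eq_abs, abs_neg,
    abs_of_pos ha, abs_mul, abs_mul, abs_mul, abs_of_pos (by norm_num : (0:ℝ) < 2),
    abs_of_pos hlam, abs_of_nonneg (sq_nonneg t)] at hn
  -- hn : (p * β l * t ^ p) * t = 2 * lam * |ξ| * t ^ 2 * ‖(Yh αs - αo) l‖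
  have key : p * β l * t ^ p * t ≤ 2 * lam * ct * t ^ 2 := by
    rw [hn]
    have hy0 : 0 ≤ ‖(Yh αs - αo) l‖ := norm_nonneg _
    have h1 : |ξ| * ‖(Yh αs - αo) l‖ ≤ ct := by nlinarith [abs_nonneg ξ]
    have h2 : (0:ℝ) ≤ 2 * lam * t ^ 2 := by positivity
    nlinarith [mul_le_mul_of_nonneg_left h1 h2]
  have e1 : t ^ p * t = t ^ (p + 1) := by
    rw [Real.rpow_add ht, Real.rpow_one]
  have e2 : t ^ 2 = t ^ (p + 1) * t ^ (1 - p) := by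
    rw [← Real.rpow_natCast t 2, ← Real.rpow_add ht]
    congr 1
    push_cast
    ring
  have hT : (0 : ℝ) < t ^ (p + 1) := Real.rpow_pos_of_pos ht _
  have hquot : p * β l ≤ 2 * lam * ct * t ^ (1 - p) := by
    rw [mul_assoc, e1, e2] at key
    nlinarith [key, hT]
  have hden : (0 : ℝ) < 2 * lam * ct := by positivity
  have h3 : p * β l / (2 * lam * ct) ≤ t ^ (1 - p) := by
    rw [div_le_iff₀ hden]
    nlinarith [hquot]
  have hlhs : 0 ≤ p * β l / (2 * lam * ct) := by
    have := (hβ l); positivity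
  have hexp : (0 : ℝ) ≤ 1 / (1 - p) := by
    have : (0:ℝ) < 1 - p := by linarith
    positivity
  have := Real.rpow_le_rpow hlhs h3 hexp
  calc (p * β l / (2 * lam * ct)) ^ (1 / (1 - p))
      ≤ (t ^ (1 - p)) ^ (1 / (1 - p)) := this
    _ = t := by
        rw [← Real.rpow_mul ht.le, mul_one_div, div_self (by linarith : (1:ℝ) - p ≠ 0),
          Real.rpow_one]
end

section
/- Let c̃ > 0 and let α* ∈ V be a scaled KKT point of the constrained problem with multiplier ν ≥ 0 (i.e., p·β_l·‖α*_l‖^p·α*_l + 2ν·‖α*_l‖²·(Ŷα* − α°)_l = 0 for every l ∈ {0,…,L}, ν·g(α*) = 0, and g(α*) ≤ 0), and suppose ‖Ŷα* − α°‖ ≤ c̃. Then for every l ∈ {0,…,L} with α*_l ≠ 0, one has ν > 0 and ‖α*_l‖ ≥ (p·β_l/(2νc̃))^{1/(1−p)}. -/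
/-- lower bound on the norms of the nonzero groups of a scaled KKT point of
the constrained problem, together with positivity of the multiplier. -/
theorem stmt5 (L : ℕ) (p : ℝ) (hp0 : 0 < p) (hp1 : p < 1)
    (β : Fin (L + 1) → ℝ) (hβ : ∀ l, 0 < β l)
    (Yh : V L →ₗ[ℂ] V L)
    (hsa : ∀ x y : V L, (inner ℂ (Yh x) y : ℂ) = inner ℂ x (Yh y))
    (hpd : ∀ α : V L, α ≠ 0 → 0 < (inner ℂ α (Yh α) : ℂ).re)
    (αo : V L) (c ϱ : ℝ)
    (g : V L → ℝ)
    (hg : ∀ α : V L, g α = (inner ℂ α (Yh α) : ℂ).re - 2 * (inner ℂ αo α : ℂ).re + c - ϱ)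
    (ct : ℝ) (hct : 0 < ct)
    (αs : V L) (ν : ℝ) (hν : 0 ≤ ν)
    (hstat : ∀ l : Fin (L + 1),
      (p * β l * ‖αs l‖ ^ p) • αs l
        + (2 * ν * ‖αs l‖ ^ 2) • ((Yh αs - αo) l) = 0)
    (hcomp : ν * g αs = 0) (hfeas : g αs ≤ 0)
    (hbound : ‖Yh αs - αo‖ ≤ ct) :
    ∀ l : Fin (L + 1), αs l ≠ 0 →
      0 < ν ∧ (p * β l / (2 * ν * ct)) ^ (1 / (1 - p)) ≤ ‖αs l‖ := by
  intro l hl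
  set a := ‖αs l‖ with ha
  have ha0 : 0 < a := norm_pos_iff.mpr hl
  set w := (Yh αs - αo) l with hw
  have hcoef : 0 < p * β l * a ^ p :=
    mul_pos (mul_pos hp0 (hβ l)) (Real.rpow_pos_of_pos ha0 p)
  have hstatl := hstat l
  have hν0 : 0 < ν := by
    rcases lt_or_eq_of_le hν with h | h
    · exact h
    · exfalso
      rw [← h] at hstatl
      simp only [mul_zero, zero_mul, zero_smul, add_zero] at hstatl
      exact hl ((smul_eq_zero.mp hstatl).resolve_left hcoef.ne')
  refine ⟨hν0, ?_⟩
  have hwle : ‖w‖ ≤ ct := by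
    have h1 : ‖w‖ ^ 2 ≤ ‖Yh αs - αo‖ ^ 2 := by
      rw [PiLp.norm_sq_eq_of_L2 _ (Yh αs - αo)]
      exact Finset.single_le_sum (f := fun i => ‖(Yh αs - αo) i‖ ^ 2)
        (fun i _ => sq_nonneg _) (Finset.mem_univ l)
    nlinarith [norm_nonneg w, norm_nonneg (Yh αs - αo)]
  have heq : p * β l * a ^ p * a = 2 * ν * a ^ 2 * ‖w‖ := by
    have h2 : (p * β l * a ^ p) • αs l = -((2 * ν * a ^ 2) • w) := by
      linear_combination (norm := module) hstatl
    have h3 := congrArg norm h2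
    rw [norm_neg, norm_smul, norm_smul, Real.norm_of_nonneg hcoef.le,
      Real.norm_of_nonneg (by positivity)] at h3
    exact h3
  have e1 : a ^ (p + 1) = a ^ p * a := Real.rpow_add_one ha0.ne' p
  have e2 : a ^ (1 - p) * a ^ (p + 1) = a ^ 2 := by
    rw [← Real.rpow_add ha0, ← Real.rpow_natCast a 2]
    congr 1
    push_cast
    ring
  have hkey : p * β l ≤ 2 * ν * ct * a ^ (1 - p) := by
    have hle : p * β l * a ^ (p + 1) ≤ (2 * ν * ct * a ^ (1 - p)) * a ^ (p + 1) := by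
      calc p * β l * a ^ (p + 1) = 2 * ν * a ^ 2 * ‖w‖ := by rw [e1]; linarith [heq]
        _ ≤ 2 * ν * a ^ 2 * ct := by
            have : (0:ℝ) ≤ 2 * ν * a ^ 2 := by positivity
            exact mul_le_mul_of_nonneg_left hwle this
        _ = (2 * ν * ct * a ^ (1 - p)) * a ^ (p + 1) := by rw [← e2]; ring
    exact le_of_mul_le_mul_right hle (Real.rpow_pos_of_pos ha0 _)
  have hdiv : p * β l / (2 * ν * ct) ≤ a ^ (1 - p) := by
    rw [div_le_iff₀ (by positivity)]
    linarith [hkey]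
  calc (p * β l / (2 * ν * ct)) ^ (1 / (1 - p))
      ≤ (a ^ (1 - p)) ^ (1 / (1 - p)) :=
        Real.rpow_le_rpow
          (le_of_lt (div_pos (mul_pos hp0 (hβ l)) (by positivity)))
          hdiv (by
            have h1p : (0:ℝ) < 1 - p := by linarith
            positivity)
    _ = a := by
        rw [← Real.rpow_mul ha0.le,
          mul_one_div_cancel (by linarith : (1:ℝ) - p ≠ 0), Real.rpow_one]
end

section
/- Let α* ∈ F_e be a local minimizer of Φ on F_e (i.e., there is a neighborhood N of α* such that Φ(α*) ≤ Φ(α) for all α ∈ N ∩ F_e). If there exists l ∈ {0,…,L} such that α*_l ≠ 0 and (Ŷα* − α°)_l ≠ 0, then α* is a scaled KKT point of the constrained problem: there exists ν ≥ 0 such that p·β_l·‖α*_l‖^p·α*_l + 2ν·‖α*_l‖²·(Ŷα* − α°)_l = 0 for every l ∈ {0,…,L}, ν·g(α*) = 0, and g(α*) ≤ 0. -/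
set_option maxHeartbeats 2000000

lemma aux_slope {f : ℝ → ℝ} {d : ℝ} (hf : HasDerivAt f d 0)
    (h : ∀ᶠ t in nhdsWithin 0 (Set.Ioi 0), f 0 ≤ f t) : 0 ≤ d := by
  have h1 : HasDerivWithinAt f d (Set.Ioi 0) 0 := hf.hasDerivWithinAt
  rw [hasDerivWithinAt_iff_tendsto_slope] at h1
  have hs : Set.Ioi (0:ℝ) \ {0} = Set.Ioi 0 := by
    ext t
    simp only [Set.mem_diff, Set.mem_singleton_iff, Set.mem_Ioi]
    exact ⟨fun h => h.1, fun h => ⟨h, ne_of_gt h⟩⟩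
  rw [hs] at h1
  refine ge_of_tendsto h1 ?_
  filter_upwards [h, self_mem_nhdsWithin] with t ht ht0
  rw [slope_def_field]
  have h1' : (0:ℝ) < t := ht0
  have h2' : 0 ≤ f t - f 0 := by linarith
  have h3' : t - 0 = t := by ring
  rw [h3']
  positivity

lemma aux_eps {A K : ℝ} (h : ∀ ε : ℝ, 0 < ε → A ≤ ε * K) : A ≤ 0 := by
  by_contra hA
  push_neg at hA
  rcases le_or_gt K 0 with hK | hK
  · have := h 1 one_pos
    nlinarith
  · have h1 := h (A / (2 * K)) (by positivity)
    have h2 : A / (2*K) * K = A/2 := by field_simp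
    nlinarith

lemma aux_deriv {E : Type*} [NormedAddCommGroup E] [InnerProductSpace ℂ E]
    (x y : E) (p : ℝ) (hx : x ≠ 0) :
    HasDerivAt (fun t : ℝ => ‖x + t • y‖ ^ p)
      (p * ‖x‖ ^ (p - 2) * (inner ℂ x y : ℂ).re) 0 := by
  set a : ℝ := ‖x‖^2 with ha
  set b : ℝ := (inner ℂ x y : ℂ).re with hb
  set cc : ℝ := ‖y‖^2 with hcc
  have hxn : 0 < ‖x‖ := norm_pos_iff.mpr hx
  have ha0 : 0 < a := by positivity
  have hfun : ∀ t : ℝ, ‖x + t • y‖ ^ p = (a + 2*b*t + cc*t^2) ^ (p/2) := by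
    intro t
    have hsm : t • y = ((t : ℂ)) • y := RCLike.real_smul_eq_coe_smul (K := ℂ) t y
    have hn : ‖x + t • y‖^2 = a + 2*b*t + cc*t^2 := by
      rw [norm_add_sq (𝕜 := ℂ), hsm, inner_smul_right, norm_smul]
      simp only [RCLike.re_to_complex, Complex.mul_re, Complex.ofReal_re,
        Complex.ofReal_im, Complex.norm_real, Real.norm_eq_abs, mul_pow, sq_abs,
        zero_mul, sub_zero]
      ring
    calc ‖x + t•y‖^p = ((‖x + t•y‖^2 : ℝ))^(p/2) := by
          rw [← Real.rpow_natCast ‖x + t•y‖ 2, ← Real.rpow_mul (norm_nonneg _)]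
          congr 1
          push_cast
          ring
      _ = _ := by rw [hn]
  have hinner : HasDerivAt (fun t : ℝ => a + 2*b*t + cc*t^2) (2*b) 0 := by
    have h1 : HasDerivAt (fun t : ℝ => a + 2*b*t + cc*t^2) (0 + 2*b*1 + cc*(2*0^1)) 0 := by
      exact ((hasDerivAt_const 0 a).add (((hasDerivAt_id (0:ℝ)).const_mul (2*b)))).add
        ((hasDerivAt_pow 2 (0:ℝ)).const_mul cc)
    simpa using h1
  have hval : a + 2*b*0 + cc*0^2 = a := by ring
  have hne : (fun t : ℝ => a + 2*b*t + cc*t^2) 0 ≠ 0 := by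
    show a + 2*b*0 + cc*0^2 ≠ 0
    rw [hval]; exact ha0.ne'
  have hD := hinner.rpow_const (p := p/2) (Or.inl hne)
  have hfe : (fun t : ℝ => ‖x + t • y‖^p) = fun t => (a + 2*b*t + cc*t^2)^(p/2) :=
    funext hfun
  rw [hfe]
  convert hD using 1
  rw [hval]
  have hpow : a ^ (p/2 - 1) = ‖x‖ ^ (p - 2) := by
    rw [ha, ← Real.rpow_natCast ‖x‖ 2, ← Real.rpow_mul (norm_nonneg x)]
    congr 1
    push_cast
    ring
  rw [hpow]
  ring

/-- a local minimizer of `Φ` on the feasible set at which some group is nonzero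
and has nonzero residual is a scaled KKT point of the constrained problem. -/
theorem stmt6 (L : ℕ) (p : ℝ) (hp0 : 0 < p) (hp1 : p < 1)
    (β : Fin (L + 1) → ℝ) (hβ : ∀ l, 0 < β l)
    (Φ : V L → ℝ)
    (hΦ : ∀ α : V L, Φ α = ∑ l : Fin (L + 1), β l * ‖α l‖ ^ p)
    (Yh : V L →ₗ[ℂ] V L)
    (hsa : ∀ x y : V L, (inner ℂ (Yh x) y : ℂ) = inner ℂ x (Yh y))
    (hpd : ∀ α : V L, α ≠ 0 → 0 < (inner ℂ α (Yh α) : ℂ).re)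
    (αo : V L) (c ϱ : ℝ)
    (g : V L → ℝ)
    (hg : ∀ α : V L, g α = (inner ℂ α (Yh α) : ℂ).re - 2 * (inner ℂ αo α : ℂ).re + c - ϱ)
    (αs : V L) (hfeas : g αs ≤ 0)
    (hloc : ∃ N ∈ nhds αs, ∀ α ∈ N, g α ≤ 0 → Φ αs ≤ Φ α)
    (hnz : ∃ l : Fin (L + 1), αs l ≠ 0 ∧ (Yh αs - αo) l ≠ 0) :
    ∃ ν : ℝ, 0 ≤ ν ∧
      (∀ l : Fin (L + 1),
        (p * β l * ‖αs l‖ ^ p) • αs l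
          + (2 * ν * ‖αs l‖ ^ 2) • ((Yh αs - αo) l) = 0) ∧
      ν * g αs = 0 ∧ g αs ≤ 0 := by
  classical
  obtain ⟨l₀, hl₀, hr₀⟩ := hnz
  set r : V L := Yh αs - αo with hrdef
  -- basic real-inner-product lemmas
  have ipsm : ∀ (t : ℝ) (x y : V L), (inner ℂ x (t • y) : ℂ).re = t * (inner ℂ x y : ℂ).re := by
    intro t x y
    rw [RCLike.real_smul_eq_coe_smul (K := ℂ) t y, inner_smul_right]
    simp [Complex.mul_re]
  have ipsml : ∀ (t : ℝ) (x y : V L), (inner ℂ (t • x) y : ℂ).re = t * (inner ℂ x y : ℂ).re := by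
    intro t x y
    rw [RCLike.real_smul_eq_coe_smul (K := ℂ) t x, inner_smul_left]
    simp [Complex.mul_re]
  have ipsymm : ∀ x y : V L, (inner ℂ x y : ℂ).re = (inner ℂ y x : ℂ).re := by
    intro x y
    simpa using inner_re_symm (𝕜 := ℂ) x y
  have ipself : ∀ x : V L, (inner ℂ x x : ℂ).re = ‖x‖^2 := by
    intro x
    simpa using inner_self_eq_norm_sq (𝕜 := ℂ) x
  have ipadd : ∀ x y z : V L, (inner ℂ x (y + z) : ℂ).re = (inner ℂ x y : ℂ).re + (inner ℂ x z : ℂ).re := by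
    intro x y z; rw [inner_add_right]; simp
  have ipsub : ∀ x y z : V L, (inner ℂ x (y - z) : ℂ).re = (inner ℂ x y : ℂ).re - (inner ℂ x z : ℂ).re := by
    intro x y z; rw [inner_sub_right]; simp
  have ipneg : ∀ x y : V L, (inner ℂ x (-y) : ℂ).re = -(inner ℂ x y : ℂ).re := by
    intro x y; rw [inner_neg_right]; simp
  -- quadratic expansion of g
  have hq : ∀ w : V L, g (αs + w) =
      g αs + (2 * ((inner ℂ r w : ℂ)).re + ((inner ℂ w (Yh w) : ℂ)).re) := by
    intro w
    have e1 : (inner ℂ αs (Yh w) : ℂ) = inner ℂ (Yh αs) w := (hsa αs w).symm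
    have e2 : ((inner ℂ w (Yh αs) : ℂ)).re = ((inner ℂ (Yh αs) w : ℂ)).re := by
      simpa using inner_re_symm (𝕜 := ℂ) w (Yh αs)
    rw [hg, hg]
    rw [map_add, inner_add_left, inner_add_right, inner_add_right, e1,
      inner_add_right, hrdef, inner_sub_left]
    simp only [Complex.add_re, Complex.sub_re]
    rw [e2]
    ring
  -- Φ αs > 0
  have hΦpos : 0 < Φ αs := by
    rw [hΦ]
    apply Finset.sum_pos'
    · intro l _
      have : (0:ℝ) ≤ ‖αs l‖ ^ p := Real.rpow_nonneg (norm_nonneg _) p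
      have := (hβ l).le
      positivity
    · refine ⟨l₀, Finset.mem_univ _, ?_⟩
      have h1 : 0 < ‖αs l₀‖ := norm_pos_iff.mpr hl₀
      have h2 : 0 < ‖αs l₀‖ ^ p := Real.rpow_pos_of_pos h1 p
      exact mul_pos (hβ l₀) h2
  -- Step 1 : g αs = 0
  have gzero : g αs = 0 := by
    rcases eq_or_lt_of_le hfeas with h0 | hlt
    · exact h0
    exfalso
    obtain ⟨N, hN, hmin⟩ := hloc
    set A : ℝ := (inner ℂ αs (Yh αs) : ℂ).re with hA
    set B : ℝ := (inner ℂ αo αs : ℂ).re with hB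
    have hgt : ∀ t : ℝ, g (t • αs) = t^2*A - 2*(t*B) + c - ϱ := by
      intro t
      have smY : Yh (t • αs) = t • Yh αs := by
        rw [RCLike.real_smul_eq_coe_smul (K := ℂ) t αs, map_smul,
          ← RCLike.real_smul_eq_coe_smul (K := ℂ)]
      rw [hg, smY, ipsm, ipsml, ipsm]
      ring
    have hg1 : g ((1:ℝ) • αs) < 0 := by rw [one_smul]; exact hlt
    have hcontq : Continuous fun t : ℝ => t^2*A - 2*(t*B) + c - ϱ := by
      apply Continuous.sub _ continuous_const
      apply Continuous.add _ continuous_const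
      apply Continuous.sub
      · exact (continuous_pow 2).mul continuous_const
      · exact continuous_const.mul (continuous_id.mul continuous_const)
    have hev1 : ∀ᶠ t in nhds (1:ℝ), g (t • αs) < 0 := by
      have ht : Filter.Tendsto (fun t : ℝ => t^2*A - 2*(t*B) + c - ϱ) (nhds 1)
          (nhds ((1:ℝ)^2*A - 2*((1:ℝ)*B) + c - ϱ)) := hcontq.tendsto 1
      have hlt1 : (1:ℝ)^2*A - 2*((1:ℝ)*B) + c - ϱ < 0 := by
        have := hg1; rw [hgt 1] at this; exact this
      filter_upwards [ht.eventually (eventually_lt_nhds hlt1)] with t ht'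
      rw [hgt t]; exact ht'
    have hev2 : ∀ᶠ t in nhds (1:ℝ), t • αs ∈ N := by
      have hc : Filter.Tendsto (fun t : ℝ => t • αs) (nhds 1) (nhds αs) := by
        have : Continuous fun t : ℝ => t • αs := continuous_id.smul continuous_const
        simpa using this.tendsto 1
      exact hc.eventually_mem hN
    have hev3 : ∀ᶠ t in nhdsWithin (1:ℝ) (Set.Iio 1), Φ αs ≤ Φ (t • αs) ∧ t ∈ Set.Ioo (0:ℝ) 1 := by
      have hmem : Set.Ioo (0:ℝ) 1 ∈ nhdsWithin (1:ℝ) (Set.Iio 1) :=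
        Ioo_mem_nhdsLT_of_mem (by constructor <;> norm_num)
      filter_upwards [(hev1.and hev2).filter_mono nhdsWithin_le_nhds, hmem] with t ht htm
      exact ⟨hmin _ ht.2 ht.1.le, htm⟩
    obtain ⟨t, htΦ, ht0, ht1⟩ := hev3.exists
    have hΦt : Φ (t • αs) = t^p * Φ αs := by
      rw [hΦ, hΦ, Finset.mul_sum]
      apply Finset.sum_congr rfl
      intro l _
      have : (t • αs) l = t • αs l := PiLp.smul_apply _ t αs l
      rw [this, norm_smul, Real.norm_eq_abs, abs_of_pos ht0,
        Real.mul_rpow ht0.le (norm_nonneg _)]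
      ring
    have htp : t^p < 1 := Real.rpow_lt_one ht0.le ht1 hp0
    rw [hΦt] at htΦ
    nlinarith
  -- Claim A : first-order condition along supported feasible directions
  have hp2 : p - 2 ≠ 0 := by linarith
  have claimA : ∀ h : V L, (∀ l, αs l = 0 → h l = 0) → (inner ℂ r h : ℂ).re < 0 →
      0 ≤ ∑ l : Fin (L+1), β l * (p * ‖αs l‖^(p-2) * (inner ℂ (αs l) (h l) : ℂ).re) := by
    intro h hsupp hneg
    obtain ⟨N, hN, hmin⟩ := hloc
    have hh0 : h ≠ 0 := by
      intro h0
      rw [h0] at hneg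
      simp at hneg
    have hQ : 0 < (inner ℂ h (Yh h) : ℂ).re := hpd h hh0
    set B : ℝ := (inner ℂ r h : ℂ).re with hBdef
    set Q : ℝ := (inner ℂ h (Yh h) : ℂ).re with hQdef
    have hgq : ∀ t : ℝ, g (αs + t • h) = 2*(t*B) + t^2*Q := by
      intro t
      have smY : Yh (t • h) = t • Yh h := by
        rw [RCLike.real_smul_eq_coe_smul (K := ℂ) t h, map_smul,
          ← RCLike.real_smul_eq_coe_smul (K := ℂ)]
      rw [hq (t • h), gzero, smY, ipsm, ipsm, ipsml]
      ring
    have hev2 : ∀ᶠ t in nhdsWithin (0:ℝ) (Set.Ioi 0), g (αs + t • h) ≤ 0 := by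
      have hBQ : 0 < -B / Q := by
        apply div_pos _ hQ
        linarith
      have hmem : Set.Ioo (0:ℝ) (-B/Q) ∈ nhdsWithin (0:ℝ) (Set.Ioi 0) :=
        Ioo_mem_nhdsGT_of_mem ⟨le_refl _, hBQ⟩
      filter_upwards [hmem] with t htm
      obtain ⟨ht0, htB⟩ := htm
      rw [hgq]
      have h1 : t * Q < -B := (lt_div_iff₀ hQ).mp htB
      nlinarith
    have hev1 : ∀ᶠ t in nhds (0:ℝ), αs + t • h ∈ N := by
      have hc : Filter.Tendsto (fun t : ℝ => αs + t • h) (nhds 0) (nhds αs) := by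
        have hcont : Continuous fun t : ℝ => αs + t • h :=
          continuous_const.add (continuous_id.smul continuous_const)
        have := hcont.tendsto 0
        simpa using this
      exact hc.eventually_mem hN
    have hψ : HasDerivAt (fun t : ℝ => ∑ l : Fin (L+1), β l * ‖αs l + t • h l‖^p)
        (∑ l : Fin (L+1), β l * (p * ‖αs l‖^(p-2) * (inner ℂ (αs l) (h l) : ℂ).re)) 0 := by
      apply HasDerivAt.fun_sum
      intro l _
      by_cases hl : αs l = 0
      · have hhl : h l = 0 := hsupp l hl
        simp only [hl, hhl, smul_zero, add_zero, norm_zero, Real.zero_rpow hp0.ne',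
          Real.zero_rpow hp2, inner_zero_left, Complex.zero_re, mul_zero, zero_mul]
        exact hasDerivAt_const 0 0
      · exact (aux_deriv (αs l) (h l) p hl).const_mul (β l)
    have hfeq : ∀ t : ℝ, Φ (αs + t • h) = ∑ l : Fin (L+1), β l * ‖αs l + t • h l‖^p := by
      intro t
      rw [hΦ]
      apply Finset.sum_congr rfl
      intro l _
      have : (αs + t • h) l = αs l + t • h l := by
        rw [PiLp.add_apply, PiLp.smul_apply]
      rw [this]
    refine aux_slope hψ ?_
    filter_upwards [hev2, hev1.filter_mono nhdsWithin_le_nhds] with t h2 h1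
    rw [← hfeq t]
    have hz : αs + (0:ℝ) • h = αs := by simp
    rw [show (∑ l : Fin (L+1), β l * ‖αs l + (0:ℝ) • h l‖ ^ p) = Φ αs from by
      rw [← hfeq 0, hz]]
    exact hmin _ h1 h2
  -- the gradient vector F and truncated residual Gs
  set F : V L := (WithLp.equiv 2 _).symm
    (fun l : Fin (L+1) => (p * β l * ‖αs l‖^(p-2)) • αs l) with hFdef
  set Gs : V L := (WithLp.equiv 2 _).symm
    (fun l : Fin (L+1) => if αs l = 0 then 0 else r l) with hGdef
  have hFl : ∀ l : Fin (L+1), F l = (p * β l * ‖αs l‖^(p-2)) • αs l := by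
    intro l
    rw [hFdef]; rfl
  have hGl : ∀ l : Fin (L+1), Gs l = if αs l = 0 then 0 else r l := by
    intro l
    rw [hGdef]; rfl
  have hFsupp : ∀ l : Fin (L+1), αs l = 0 → F l = 0 := by
    intro l hl
    rw [hFl, hl, smul_zero]
  have hGsupp : ∀ l : Fin (L+1), αs l = 0 → Gs l = 0 := by
    intro l hl
    rw [hGl, if_pos hl]
  -- bridge : the Claim A sum is the real inner ℂ product with F
  have hip : ∀ h : V L, (inner ℂ F h : ℂ).re
      = ∑ l : Fin (L+1), β l * (p * ‖αs l‖^(p-2) * (inner ℂ (αs l) (h l) : ℂ).re) := by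
    intro h
    rw [PiLp.inner_apply, Complex.re_sum]
    apply Finset.sum_congr rfl
    intro l _
    rw [hFl, RCLike.real_smul_eq_coe_smul (K := ℂ), inner_smul_left]
    simp [Complex.mul_re] <;> ring
  -- supported vectors pair with r as with Gs
  have hrg : ∀ h : V L, (∀ l, αs l = 0 → h l = 0) →
      (inner ℂ r h : ℂ).re = (inner ℂ Gs h : ℂ).re := by
    intro h hs
    rw [PiLp.inner_apply, PiLp.inner_apply, Complex.re_sum, Complex.re_sum]
    apply Finset.sum_congr rfl
    intro l _
    by_cases hl : αs l = 0
    · rw [hs l hl, inner_zero_right, inner_zero_right]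
    · rw [hGl, if_neg hl]
  have hGs0 : Gs ≠ 0 := by
    intro h0
    apply hr₀
    have : Gs l₀ = 0 := by rw [h0]; exact PiLp.zero_apply _ l₀
    rw [hGl, if_neg hl₀] at this
    exact this
  have hGn : 0 < ‖Gs‖ := norm_pos_iff.mpr hGs0
  have hGn2 : 0 < ‖Gs‖^2 := by positivity
  set aa : ℝ := (inner ℂ F Gs : ℂ).re / ‖Gs‖^2 with haa
  set Fp : V L := F - aa • Gs with hFp
  have hFpsupp : ∀ l : Fin (L+1), αs l = 0 → Fp l = 0 := by
    intro l hl
    rw [hFp, PiLp.sub_apply, PiLp.smul_apply, hFsupp l hl, hGsupp l hl, smul_zero, sub_zero]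
  have hGsFp : (inner ℂ Gs Fp : ℂ).re = 0 := by
    rw [hFp, ipsub, ipsm, ipself, ipsymm Gs F, haa]
    field_simp
    ring
  have hFFp : (inner ℂ F Fp : ℂ).re = ‖Fp‖^2 := by
    have hsum : F = Fp + aa • Gs := by rw [hFp]; abel
    calc (inner ℂ F Fp : ℂ).re = (inner ℂ Fp F : ℂ).re := ipsymm _ _
      _ = (inner ℂ Fp Fp : ℂ).re + (inner ℂ Fp (aa • Gs) : ℂ).re := by
          rw [← ipadd]; rw [← hsum]
      _ = ‖Fp‖^2 + aa * (inner ℂ Fp Gs : ℂ).re := by rw [ipself, ipsm]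
      _ = ‖Fp‖^2 + aa * 0 := by rw [ipsymm Fp Gs, hGsFp]
      _ = ‖Fp‖^2 := by ring
  have hFGs : (inner ℂ F Gs : ℂ).re = aa * ‖Gs‖^2 := by
    rw [haa]; field_simp
  -- show Fp = 0
  have hkey : ∀ ε : ℝ, 0 < ε → ‖Fp‖^2 ≤ ε * (-(inner ℂ F Gs : ℂ).re) := by
    intro ε hε
    set hh : V L := -Fp - ε • Gs with hhh
    have hhsupp : ∀ l, αs l = 0 → hh l = 0 := by
      intro l hl
      rw [hhh, PiLp.sub_apply, PiLp.neg_apply, PiLp.smul_apply, hFpsupp l hl,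
        hGsupp l hl, smul_zero, neg_zero, sub_zero]
    have hhneg : (inner ℂ r hh : ℂ).re < 0 := by
      rw [hrg hh hhsupp, hhh, ipsub, ipneg, ipsm, hGsFp, ipself]
      simp only [neg_zero, zero_sub, neg_lt, neg_zero]
      positivity
    have hA := claimA hh hhsupp hhneg
    rw [← hip] at hA
    rw [hhh, ipsub, ipneg, ipsm, hFFp] at hA
    linarith
  have hFp2 : ‖Fp‖^2 ≤ 0 := aux_eps hkey
  have hFp0 : Fp = 0 := by
    have : ‖Fp‖^2 = 0 := le_antisymm hFp2 (by positivity)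
    have : ‖Fp‖ = 0 := by nlinarith [norm_nonneg Fp]
    exact norm_eq_zero.mp this
  have hFaG : F = aa • Gs := by
    have := sub_eq_zero.mp (hFp ▸ hFp0)
    exact this
  -- aa ≤ 0
  have haneg : aa ≤ 0 := by
    have hsupp' : ∀ l, αs l = 0 → (-Gs) l = 0 := by
      intro l hl
      rw [PiLp.neg_apply, hGsupp l hl, neg_zero]
    have hneg' : (inner ℂ r (-Gs) : ℂ).re < 0 := by
      rw [hrg _ hsupp', ipneg, ipself]
      simpa using hGn2
    have hA := claimA (-Gs) hsupp' hneg'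
    rw [← hip, ipneg, hFGs] at hA
    nlinarith
  -- conclusion
  refine ⟨-aa/2, by linarith, ?_, by rw [gzero]; ring, hfeas⟩
  intro l
  by_cases hl : αs l = 0
  · rw [hl]
    simp
  · have hcoordF := congrArg (fun v : V L => v l) hFaG
    simp only at hcoordF
    rw [hFl, PiLp.smul_apply, hGl, if_neg hl] at hcoordF
    -- hcoordF : (p * β l * ‖αs l‖^(p-2)) • αs l = aa • r l
    have h2 := congrArg (fun v => (‖αs l‖^2 : ℝ) • v) hcoordF
    simp only [smul_smul] at h2
    have hpos : 0 < ‖αs l‖ := norm_pos_iff.mpr hl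
    have hnorm : ‖αs l‖^2 * (p * β l * ‖αs l‖^(p-2)) = p * β l * ‖αs l‖^p := by
      have hmulpow : (‖αs l‖ : ℝ)^(2:ℕ) * ‖αs l‖^(p-2) = ‖αs l‖^p := by
        rw [← Real.rpow_natCast ‖αs l‖ 2, ← Real.rpow_add hpos]
        norm_num
      calc ‖αs l‖^2 * (p * β l * ‖αs l‖^(p-2))
          = (p * β l) * ((‖αs l‖ : ℝ)^(2:ℕ) * ‖αs l‖^(p-2)) := by ring
        _ = (p * β l) * ‖αs l‖^p := by rw [hmulpow]
        _ = p * β l * ‖αs l‖^p := by ring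
    rw [hnorm] at h2
    rw [h2, ← add_smul]
    have : ‖αs l‖^2 * aa + 2 * (-aa/2) * ‖αs l‖^2 = 0 := by ring
    rw [this, zero_smul]
end

section
/- (i) Let λ > 0 and let α* ∈ V be a scaled first-order stationary point of the penalty problem (there exists ξ ∈ ℝ such that p·β_l·‖α*_l‖^p·α*_l + 2λξ·‖α*_l‖²·(Ŷα* − α°)_l = 0 for every l ∈ {0,…,L}, where ξ = 0 if g(α*) < 0, ξ ∈ [0,1] if g(α*) = 0, and ξ = 1 if g(α*) > 0). If g(α*) ≤ 0, then α* is a scaled KKT point of the constrained problem (there exists ν ≥ 0 with p·β_l·‖α*_l‖^p·α*_l + 2ν·‖α*_l‖²·(Ŷα* − α°)_l = 0 for all l, ν·g(α*) = 0, and g(α*) ≤ 0). (ii) Conversely, if α* is a scaled KKT point with multiplier ν ≥ 0, then for every λ > 0 with λ ≥ ν, α* is a scaled first-order stationary point of the penalty problem with parameter λ. -/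
/-- (i) a feasible scaled first-order stationary point of the penalty problem is
a scaled KKT point of the constrained problem; (ii) conversely, a scaled KKT point with
multiplier `ν` is a scaled first-order stationary point of the penalty problem whenever
`λ ≥ ν`. -/
theorem stmt7 (L : ℕ) (p : ℝ) (hp0 : 0 < p) (hp1 : p < 1)
    (β : Fin (L + 1) → ℝ) (hβ : ∀ l, 0 < β l)
    (Yh : V L →ₗ[ℂ] V L)
    (hsa : ∀ x y : V L, (inner ℂ (Yh x) y : ℂ) = inner ℂ x (Yh y))
    (hpd : ∀ α : V L, α ≠ 0 → 0 < (inner ℂ α (Yh α) : ℂ).re)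
    (αo : V L) (c ϱ : ℝ)
    (g : V L → ℝ)
    (hg : ∀ α : V L, g α = (inner ℂ α (Yh α) : ℂ).re - 2 * (inner ℂ αo α : ℂ).re + c - ϱ)
    (αs : V L) :
    ((∀ lam : ℝ, 0 < lam →
        (∃ ξ : ℝ,
          (g αs < 0 → ξ = 0) ∧ (g αs = 0 → ξ ∈ Set.Icc (0 : ℝ) 1) ∧ (0 < g αs → ξ = 1) ∧
          ∀ l : Fin (L + 1),
            (p * β l * ‖αs l‖ ^ p) • αs l
              + (2 * lam * ξ * ‖αs l‖ ^ 2) • ((Yh αs - αo) l) = 0) →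
        g αs ≤ 0 →
        ∃ ν : ℝ, 0 ≤ ν ∧
          (∀ l : Fin (L + 1),
            (p * β l * ‖αs l‖ ^ p) • αs l
              + (2 * ν * ‖αs l‖ ^ 2) • ((Yh αs - αo) l) = 0) ∧
          ν * g αs = 0 ∧ g αs ≤ 0)) ∧
    (∀ ν : ℝ, 0 ≤ ν →
        ((∀ l : Fin (L + 1),
            (p * β l * ‖αs l‖ ^ p) • αs l
              + (2 * ν * ‖αs l‖ ^ 2) • ((Yh αs - αo) l) = 0) ∧
          ν * g αs = 0 ∧ g αs ≤ 0) →
        ∀ lam : ℝ, 0 < lam → ν ≤ lam →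
          ∃ ξ : ℝ,
            (g αs < 0 → ξ = 0) ∧ (g αs = 0 → ξ ∈ Set.Icc (0 : ℝ) 1) ∧ (0 < g αs → ξ = 1) ∧
            ∀ l : Fin (L + 1),
              (p * β l * ‖αs l‖ ^ p) • αs l
                + (2 * lam * ξ * ‖αs l‖ ^ 2) • ((Yh αs - αo) l) = 0) := by
  constructor
  · intro lam hlam h hfeas
    obtain ⟨ξ, h0, h1, h2, hst⟩ := h
    rcases lt_or_eq_of_le hfeas with hlt | heq
    · refine ⟨0, le_refl 0, ?_, by ring, hfeas⟩
      intro l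
      have := hst l
      rw [h0 hlt] at this
      simpa using this
    · have hξ := (h1 heq).1
      refine ⟨lam * ξ, by positivity, ?_, by rw [heq]; ring, hfeas⟩
      intro l
      have h := hst l
      convert h using 3
      ring
  · intro ν hν ⟨hst, hcomp, hfeas⟩ lam hlam hνlam
    refine ⟨ν / lam, ?_, ?_, ?_, ?_⟩
    · intro hlt
      have : ν = 0 := by
        by_contra hne
        have : 0 < ν := lt_of_le_of_ne hν (Ne.symm hne)
        nlinarith
      simp [this]
    · intro heq
      constructor
      · positivity
      · exact div_le_one_of_le₀ hνlam hlam.le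
    · intro hgt; linarith
    · intro l
      have := hst l
      have heq : 2 * lam * (ν / lam) = 2 * ν := by
        field_simp
      rw [heq]
      convert this using 3
end

section
/- Let 0 < p < 1, η > 1, ν > 0, and c̃ > 0. Define β_0 = 1 and β_l = η^l · l^p for all integers l ≥ 1. Let a : ℕ → ℝ satisfy a_l ≥ 0 for all l, suppose the series Σ_{l=0}^{∞} β_l · a_l^p converges, and suppose that a_l ≥ (p·β_l/(2νc̃))^{1/(1−p)} for every l with a_l ≠ 0. Then the set {l ∈ ℕ : a_l ≠ 0} is finite. -/
/-- if the weighted `ℓ^p` sum of a nonnegative sequence converges and its nonzero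
entries obey the lower bound `(p·β_l/(2νc̃))^{1/(1−p)}`, then only finitely many entries are
nonzero. -/
theorem stmt8 (p η ν ct : ℝ) (hp0 : 0 < p) (hp1 : p < 1) (hη : 1 < η)
    (hν : 0 < ν) (hct : 0 < ct)
    (β : ℕ → ℝ) (hβ0 : β 0 = 1)
    (hβ : ∀ l : ℕ, 1 ≤ l → β l = η ^ l * (l : ℝ) ^ p)
    (a : ℕ → ℝ) (ha : ∀ l, 0 ≤ a l)
    (hsum : Summable (fun l => β l * a l ^ p))
    (hlow : ∀ l, a l ≠ 0 → (p * β l / (2 * ν * ct)) ^ (1 / (1 - p)) ≤ a l) :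
    {l : ℕ | a l ≠ 0}.Finite := by
  have h1p : (0:ℝ) < 1 - p := by linarith
  set K : ℝ := 2 * ν * ct with hK
  have hKpos : 0 < K := by positivity
  set q : ℝ := p / (1 - p) with hq
  have hqpos : 0 < q := by positivity
  set C : ℝ := (p / K) ^ q with hC
  have hCpos : 0 < C := Real.rpow_pos_of_pos (by positivity) _
  -- β l ≥ 1 for all l
  have hβ1 : ∀ l : ℕ, 1 ≤ β l := by
    intro l
    rcases Nat.eq_zero_or_pos l with h | h
    · simp [h, hβ0]
    · rw [hβ l h]
      have h1 : (1:ℝ) ≤ η ^ l := one_le_pow₀ hη.le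
      have h2 : (1:ℝ) ≤ (l : ℝ) ^ p :=
        Real.one_le_rpow (by exact_mod_cast h) hp0.le
      nlinarith
  -- key lower bound for nonzero entries
  have hkey : ∀ l : ℕ, a l ≠ 0 → C ≤ β l * a l ^ p := by
    intro l hl
    have hβnn : 0 ≤ β l := le_trans zero_le_one (hβ1 l)
    have hbase : 0 ≤ p * β l / K := by positivity
    have h1 : ((p * β l / K) ^ (1 / (1 - p))) ^ p ≤ a l ^ p :=
      Real.rpow_le_rpow (Real.rpow_nonneg hbase _) (hlow l hl) hp0.le
    have h2 : ((p * β l / K) ^ (1 / (1 - p))) ^ p = (p * β l / K) ^ q := by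
      rw [← Real.rpow_mul hbase]
      congr 1
      field_simp [hq]
      rw [hq]; field_simp
    have h3 : (p * β l / K) ^ q = (p / K) ^ q * β l ^ q := by
      rw [← Real.mul_rpow (by positivity) hβnn]
      congr 1
      ring
    have h4 : (1:ℝ) ≤ β l ^ q := Real.one_le_rpow (hβ1 l) hqpos.le
    have h5 : C ≤ β l * ((p / K) ^ q * β l ^ q) := by
      have : C * 1 ≤ (β l * β l ^ q) * C := by
        have : (1:ℝ) ≤ β l * β l ^ q := one_le_mul_of_one_le_of_one_le (hβ1 l) h4
        nlinarith
      nlinarith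
    calc C ≤ β l * ((p / K) ^ q * β l ^ q) := h5
      _ = β l * ((p * β l / K) ^ q) := by rw [h3]
      _ = β l * ((p * β l / K) ^ (1 / (1 - p))) ^ p := by rw [h2]
      _ ≤ β l * a l ^ p := by
          apply mul_le_mul_of_nonneg_left _ hβnn
          exact h1
  -- terms tend to zero
  have htend : Filter.Tendsto (fun l => β l * a l ^ p) Filter.atTop (nhds 0) :=
    hsum.tendsto_atTop_zero
  have hev : ∀ᶠ l in Filter.atTop, β l * a l ^ p < C :=
    htend.eventually_lt_const hCpos
  have hev2 : ∀ᶠ l in Filter.atTop, a l = 0 := by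
    filter_upwards [hev] with l hl
    by_contra h
    exact absurd (hkey l h) (not_le.mpr hl)
  rcases Filter.eventually_atTop.mp hev2 with ⟨N, hN⟩
  apply Set.Finite.subset (Set.finite_Iio N)
  intro l hl
  simp only [Set.mem_setOf_eq] at hl
  simp only [Set.mem_Iio]
  by_contra h
  exact hl (hN l (not_lt.mp h))
end

section
/- Let 0 < p < 1 and η > 1, and let a : ℕ → ℝ satisfy a_l ≥ 0 for all l. If the series Σ_{l=0}^{∞} η^l · l^p · a_l^p converges (i.e., the sequence l ↦ η^l · l^p · a_l^p is summable), then the series Σ_{l=0}^{∞} η^l · l · a_l converges (i.e., the sequence l ↦ η^l · l · a_l is summable). -/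
/-- if `l ↦ η^l · l^p · a_l^p` is summable for a nonnegative sequence `a`, then
`l ↦ η^l · l · a_l` is summable. -/
theorem stmt9 (p η : ℝ) (hp0 : 0 < p) (hp1 : p < 1) (hη : 1 < η)
    (a : ℕ → ℝ) (ha : ∀ l, 0 ≤ a l)
    (hsum : Summable (fun l : ℕ => η ^ l * (l : ℝ) ^ p * a l ^ p)) :
    Summable (fun l : ℕ => η ^ l * (l : ℝ) * a l) := by
  set b : ℕ → ℝ := fun l : ℕ => η ^ l * (l : ℝ) ^ p * a l ^ p with hb
  have hη0 : (0:ℝ) < η := lt_trans one_pos hη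
  have hbnn : ∀ l, 0 ≤ b l := fun l => by
    have := Real.rpow_nonneg (Nat.cast_nonneg l : (0:ℝ) ≤ (l:ℝ)) p
    have := Real.rpow_nonneg (ha l) p
    positivity
  -- eventually b l ≤ 1
  have htend : Filter.Tendsto b Filter.atTop (nhds 0) := hsum.tendsto_atTop_zero
  have hev : ∀ᶠ l in Filter.atTop, b l ≤ 1 := by
    have := htend.eventually (ge_mem_nhds (show (0:ℝ) < 1 by norm_num))
    filter_upwards [this] with l hl using hl
  obtain ⟨N, hN⟩ := Filter.eventually_atTop.mp hev
  -- key pointwise inequality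
  have key : ∀ l : ℕ, b l ≤ 1 → η ^ l * (l : ℝ) * a l ≤ b l := by
    intro l hbl
    rcases eq_or_lt_of_le (ha l) with h0 | h0
    · simpa [← h0] using hbnn l
    rcases Nat.eq_zero_or_pos l with rfl | hl1
    · simpa using hbnn 0
    have hlpos : (0:ℝ) < (l:ℝ) := by exact_mod_cast hl1
    set x : ℝ := η ^ l * (l : ℝ) * a l with hx
    have hxpos : 0 < x := by positivity
    have hbpos : 0 < b l := by
      have h1 := Real.rpow_pos_of_pos hlpos p
      have h2 := Real.rpow_pos_of_pos h0 p
      positivity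
    have step1 : x ^ p ≤ b l := by
      have hxp : x ^ p = (η ^ l) ^ p * (l:ℝ) ^ p * a l ^ p := by
        rw [hx, Real.mul_rpow (by positivity) (ha l),
          Real.mul_rpow (by positivity) hlpos.le]
      rw [hxp, hb]
      have hηl : (1:ℝ) ≤ η ^ l := one_le_pow₀ hη.le
      have : (η ^ l) ^ p ≤ (η ^ l) ^ (1:ℝ) :=
        Real.rpow_le_rpow_of_exponent_le hηl hp1.le
      rw [Real.rpow_one] at this
      have hnn : 0 ≤ (l:ℝ) ^ p * a l ^ p := by
        have := Real.rpow_nonneg hlpos.le p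
        have := Real.rpow_nonneg (ha l) p
        positivity
      calc (η ^ l) ^ p * (l:ℝ) ^ p * a l ^ p
          = (η ^ l) ^ p * ((l:ℝ) ^ p * a l ^ p) := by ring
        _ ≤ η ^ l * ((l:ℝ) ^ p * a l ^ p) := mul_le_mul_of_nonneg_right this hnn
        _ = η ^ l * (l:ℝ) ^ p * a l ^ p := by ring
    have hinv : (1:ℝ) ≤ 1 / p := by
      rw [le_div_iff₀ hp0]; linarith
    have hxeq : x = (x ^ p) ^ (1 / p) := by
      rw [← Real.rpow_mul hxpos.le, mul_one_div, div_self hp0.ne', Real.rpow_one]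
    calc x = (x ^ p) ^ (1 / p) := hxeq
      _ ≤ (b l) ^ (1 / p) :=
          Real.rpow_le_rpow (Real.rpow_nonneg hxpos.le p) step1 (by positivity)
      _ ≤ (b l) ^ (1:ℝ) := Real.rpow_le_rpow_of_exponent_ge hbpos hbl hinv
      _ = b l := Real.rpow_one _
  -- compare tails
  rw [← summable_nat_add_iff N]
  have hbs : Summable (fun n : ℕ => b (n + N)) := (summable_nat_add_iff N).mpr hsum
  refine Summable.of_nonneg_of_le (fun n => ?_) (fun n => key (n + N) (hN (n + N) (by omega))) hbs
  have h1 : (0:ℝ) ≤ ((n + N : ℕ) : ℝ) := Nat.cast_nonneg _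
  have h2 := ha (n + N)
  positivity
end

section
/- The function ψ_{λ,μ} is differentiable on ℝ with derivative ψ'_{λ,μ}(s) = λ · min(max(s/μ, 0), 1) at every s ∈ ℝ, and this derivative is Lipschitz continuous with constant λ/μ: for all s₁, s₂ ∈ ℝ, |ψ'_{λ,μ}(s₁) − ψ'_{λ,μ}(s₂)| ≤ (λ/μ)·|s₁ − s₂|. -/
lemma sqmax_deriv (x : ℝ) : HasDerivAt (fun y : ℝ => (max y 0) ^ 2) (2 * max x 0) x := by
  rcases lt_trichotomy x 0 with hx | hx | hx
  · have h : (fun y : ℝ => (max y 0) ^ 2) =ᶠ[nhds x] fun _ => (0:ℝ) := by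
      filter_upwards [eventually_lt_nhds hx] with y hy
      simp [max_eq_right hy.le]
    have := (hasDerivAt_const x (0:ℝ)).congr_of_eventuallyEq h
    simpa [max_eq_right hx.le] using this
  · subst hx
    rw [hasDerivAt_iff_tendsto_slope]
    have hb : ∀ t : ℝ, ‖slope (fun y : ℝ => (max y 0) ^ 2) 0 t‖ ≤ |t| := by
      intro t
      rcases le_or_gt t 0 with ht | ht
      · simp [slope, max_eq_right ht]
      · have : slope (fun y : ℝ => (max y 0) ^ 2) 0 t = t := by
          simp [slope_def_field, max_eq_left ht.le]
          field_simp
        rw [this]; simp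
      
    have hg : Filter.Tendsto (fun t : ℝ => |t|) (nhdsWithin 0 {(0:ℝ)}ᶜ) (nhds 0) := by
      have := (continuous_abs.tendsto (0:ℝ)).mono_left (nhdsWithin_le_nhds (s := {(0:ℝ)}ᶜ))
      simpa using this
    have := squeeze_zero_norm hb hg
    simpa using this
  · have h : (fun y : ℝ => (max y 0) ^ 2) =ᶠ[nhds x] fun y => y ^ 2 := by
      filter_upwards [eventually_gt_nhds hx] with y hy
      simp [max_eq_left hy.le]
    have hd : HasDerivAt (fun y : ℝ => y ^ 2) (2 * x) x := by
      simpa using (hasDerivAt_pow 2 x)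
    have := hd.congr_of_eventuallyEq h
    simpa [max_eq_left hx.le] using this

lemma sup_eval (μ s : ℝ) (hμ : 0 < μ) :
    sSup ((fun t : ℝ => s * t - μ / 2 * t ^ 2) '' Set.Icc (0 : ℝ) 1)
      = s * min (max (s / μ) 0) 1 - μ / 2 * (min (max (s / μ) 0) 1) ^ 2 := by
  set c : ℝ := min (max (s / μ) 0) 1 with hc
  apply IsGreatest.csSup_eq
  constructor
  · refine ⟨c, ⟨le_min (le_max_right _ _) zero_le_one, min_le_right _ _⟩, rfl⟩
  · rintro y ⟨t, ⟨ht0, ht1⟩, rfl⟩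
    rcases le_total s 0 with hs | hs
    · have hc0 : c = 0 := by
        rw [hc, max_eq_right (div_nonpos_of_nonpos_of_nonneg hs hμ.le), min_eq_left zero_le_one]
      rw [hc0]
      nlinarith [mul_nonneg (neg_nonneg.mpr hs) ht0, sq_nonneg t]
    rcases le_total s μ with hsμ | hsμ
    · have hcs : c = s / μ := by
        rw [hc, max_eq_left (div_nonneg hs hμ.le), min_eq_left ((div_le_one hμ).mpr hsμ)]
      have hms : μ * c = s := by rw [hcs]; field_simp
      have h1 : s * t = μ * c * t := by rw [← hms]
      have h2 : s * c = μ * c * c := by rw [← hms]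
      nlinarith [mul_nonneg hμ.le (sq_nonneg (t - c))]
    · have hc1 : c = 1 := by
        rw [hc, max_eq_left (div_nonneg hs hμ.le), min_eq_right ((one_le_div hμ).mpr hsμ)]
      rw [hc1]
      nlinarith [mul_nonneg (sub_nonneg.mpr hsμ) (sub_nonneg.mpr ht1), sq_nonneg (1 - t), hμ]

lemma closed_form (μ s : ℝ) (hμ : 0 < μ) :
    s * min (max (s / μ) 0) 1 - μ / 2 * (min (max (s / μ) 0) 1) ^ 2
      = 1 / (2 * μ) * ((max s 0) ^ 2 - (max (s - μ) 0) ^ 2) := by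
  rcases le_total s 0 with hs | hs
  · rw [max_eq_right (div_nonpos_of_nonpos_of_nonneg hs hμ.le), min_eq_left zero_le_one,
      max_eq_right hs, max_eq_right (by linarith : s - μ ≤ 0)]
    ring
  rcases le_total s μ with hsμ | hsμ
  · rw [max_eq_left (div_nonneg hs hμ.le), min_eq_left ((div_le_one hμ).mpr hsμ),
      max_eq_left hs, max_eq_right (by linarith : s - μ ≤ 0)]
    field_simp
    ring
  · rw [max_eq_left (div_nonneg hs hμ.le), min_eq_right ((one_le_div hμ).mpr hsμ),
      max_eq_left hs, max_eq_left (by linarith : 0 ≤ s - μ)]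
    field_simp
    ring

lemma deriv_form (μ s : ℝ) (hμ : 0 < μ) :
    1 / (2 * μ) * (2 * max s 0 - 2 * max (s - μ) 0) = min (max (s / μ) 0) 1 := by
  rcases le_total s 0 with hs | hs
  · rw [max_eq_right (div_nonpos_of_nonpos_of_nonneg hs hμ.le), min_eq_left zero_le_one,
      max_eq_right hs, max_eq_right (by linarith : s - μ ≤ 0)]
    ring
  rcases le_total s μ with hsμ | hsμ
  · rw [max_eq_left (div_nonneg hs hμ.le), min_eq_left ((div_le_one hμ).mpr hsμ),
      max_eq_left hs, max_eq_right (by linarith : s - μ ≤ 0)]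
    field_simp
    ring
  · rw [max_eq_left (div_nonneg hs hμ.le), min_eq_right ((one_le_div hμ).mpr hsμ),
      max_eq_left hs, max_eq_left (by linarith : 0 ≤ s - μ)]
    field_simp
    ring

lemma clamp_lip (a b : ℝ) : |min (max a 0) 1 - min (max b 0) 1| ≤ |a - b| := by
  have h1 : |min (max a 0) 1 - min (max b 0) 1| ≤ |max a 0 - max b 0| := by
    have : ∀ x : ℝ, min x 1 = -max (-x) (-1) := by intro x; rw [max_neg_neg, neg_neg]
    rw [this, this]
    have := abs_max_sub_max_le_abs (-(max a 0)) (-(max b 0)) (-1)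
    calc |(-max (-max a 0) (-1)) - (-max (-max b 0) (-1))|
        = |max (-max a 0) (-1) - max (-max b 0) (-1)| := by rw [← abs_neg]; ring_nf
      _ ≤ |(-max a 0) - (-max b 0)| := this
      _ = |max a 0 - max b 0| := by rw [← abs_neg]; ring_nf
  exact h1.trans (abs_max_sub_max_le_abs a b 0)

/-- the smoothing function `ψ_{λ,μ}` is differentiable with derivative
`s ↦ λ·min(max(s/μ,0),1)`, and this derivative is Lipschitz with constant `λ/μ`. -/
theorem stmt12 (lam μ : ℝ) (hlam : 0 < lam) (hμ : 0 < μ)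
    (ψ : ℝ → ℝ)
    (hψ : ∀ s : ℝ, ψ s = lam * sSup ((fun t : ℝ => s * t - μ / 2 * t ^ 2) '' Set.Icc (0 : ℝ) 1)) :
    (∀ s : ℝ, HasDerivAt ψ (lam * min (max (s / μ) 0) 1) s) ∧
    (∀ s₁ s₂ : ℝ,
      |lam * min (max (s₁ / μ) 0) 1 - lam * min (max (s₂ / μ) 0) 1| ≤ lam / μ * |s₁ - s₂|) := by
  have hψ2 : ψ = fun s => lam * (1 / (2 * μ)) * ((max s 0) ^ 2 - (max (s - μ) 0) ^ 2) := by
    funext s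
    rw [hψ s, sup_eval μ s hμ, closed_form μ s hμ]
    ring
  constructor
  · intro s
    rw [hψ2]
    have h1 : HasDerivAt (fun y : ℝ => (max (y - μ) 0) ^ 2) (2 * max (s - μ) 0) s := by
      have := (sqmax_deriv (s - μ)).comp s ((hasDerivAt_id s).sub_const μ)
      simpa [Function.comp_def] using this
    have h2 := ((sqmax_deriv s).sub h1).const_mul (lam * (1 / (2 * μ)))
    have h3 : lam * (1 / (2 * μ)) * (2 * max s 0 - 2 * max (s - μ) 0)
        = lam * min (max (s / μ) 0) 1 := by
      rw [show lam * (1 / (2 * μ)) * (2 * max s 0 - 2 * max (s - μ) 0)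
          = lam * (1 / (2 * μ) * (2 * max s 0 - 2 * max (s - μ) 0)) by ring,
        deriv_form μ s hμ]
    rw [← h3]
    exact h2
  · intro s₁ s₂
    have h := clamp_lip (s₁ / μ) (s₂ / μ)
    have h2 : |s₁ / μ - s₂ / μ| = |s₁ - s₂| / μ := by
      rw [div_sub_div_same, abs_div, abs_of_pos hμ]
    calc |lam * min (max (s₁ / μ) 0) 1 - lam * min (max (s₂ / μ) 0) 1|
        = lam * |min (max (s₁ / μ) 0) 1 - min (max (s₂ / μ) 0) 1| := by
          rw [← mul_sub, abs_mul, abs_of_pos hlam]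
      _ ≤ lam * (|s₁ - s₂| / μ) := by
          rw [← h2]; exact mul_le_mul_of_nonneg_left h hlam.le
      _ = lam / μ * |s₁ - s₂| := by ring
end

section
/- Let (α^k)_{k ∈ ℕ} be a sequence in V, let (λ_k), (μ_k), (ε_k) be sequences of positive reals with λ_k → ∞, μ_k → 0, and ε_k → 0, and let α̃ ∈ V. Suppose that for every k, Φ(α^{k+1}) + f_{λ_k,μ_k}(α^{k+1}) ≤ Φ(α̃), and that for every k ≥ 1 and every l ∈ {0,…,L}, ‖ p·β_l·‖α^k_l‖^p·α^k_l + 2·t_k·‖α^k_l‖²·(Ŷα^k − α°)_l ‖ ≤ ε_{k−1}, where t_k = λ_k · min(max(g(α^k)/μ_k, 0), 1). Let α* be the limit of a convergent subsequence of (α^k), and assume there exists l ∈ {0,…,L} with α*_l ≠ 0 and (Ŷα* − α°)_l ≠ 0. Then α* is a scaled KKT point of the constrained problem: there exists ν ≥ 0 such that p·β_l·‖α*_l‖^p·α*_l + 2ν·‖α*_l‖²·(Ŷα* − α°)_l = 0 for every l ∈ {0,…,L}, ν·g(α*) = 0, and g(α*) ≤ 0. -/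
open Filter

/-- every accumulation point of the iterates of the smoothing penalty
algorithm at which some group is nonzero with nonzero residual is a scaled KKT point of the
constrained problem. -/
theorem stmt16 (L : ℕ) (p : ℝ) (hp0 : 0 < p) (hp1 : p < 1)
    (β : Fin (L + 1) → ℝ) (hβ : ∀ l, 0 < β l)
    (Φ : V L → ℝ)
    (hΦ : ∀ α : V L, Φ α = ∑ l : Fin (L + 1), β l * ‖α l‖ ^ p)
    (Yh : V L →ₗ[ℂ] V L)
    (hsa : ∀ x y : V L, (inner ℂ (Yh x) y : ℂ) = inner ℂ x (Yh y))
    (hpd : ∀ α : V L, α ≠ 0 → 0 < (inner ℂ α (Yh α) : ℂ).re)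
    (αo : V L) (c ϱ : ℝ)
    (g : V L → ℝ)
    (hg : ∀ α : V L, g α = (inner ℂ α (Yh α) : ℂ).re - 2 * (inner ℂ αo α : ℂ).re + c - ϱ)
    (f : ℝ → ℝ → V L → ℝ)
    (hf0 : ∀ lam mu : ℝ, ∀ α : V L, g α ≤ 0 → f lam mu α = 0)
    (hfmid : ∀ lam mu : ℝ, ∀ α : V L, 0 ≤ g α → g α ≤ mu →
      f lam mu α = lam * g α ^ 2 / (2 * mu))
    (hftop : ∀ lam mu : ℝ, ∀ α : V L, mu ≤ g α →
      f lam mu α = lam * g α - lam * mu / 2)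
    (αseq : ℕ → V L) (lamseq museq εseq : ℕ → ℝ)
    (hlam : ∀ k, 0 < lamseq k) (hmu : ∀ k, 0 < museq k) (hε : ∀ k, 0 < εseq k)
    (hlamtop : Tendsto lamseq atTop atTop)
    (hmu0 : Tendsto museq atTop (nhds 0))
    (hε0 : Tendsto εseq atTop (nhds 0))
    (αt : V L)
    (hdesc : ∀ k : ℕ, Φ (αseq (k + 1)) + f (lamseq k) (museq k) (αseq (k + 1)) ≤ Φ αt)
    (hstep : ∀ k : ℕ, 1 ≤ k → ∀ l : Fin (L + 1),
      ‖(p * β l * ‖αseq k l‖ ^ p) • αseq k l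
        + (2 * (lamseq k * min (max (g (αseq k) / museq k) 0) 1) * ‖αseq k l‖ ^ 2) •
            ((Yh (αseq k) - αo) l)‖ ≤ εseq (k - 1))
    (αstar : V L)
    (hconv : ∃ φ : ℕ → ℕ, StrictMono φ ∧ Tendsto (αseq ∘ φ) atTop (nhds αstar))
    (hnz : ∃ l : Fin (L + 1), αstar l ≠ 0 ∧ (Yh αstar - αo) l ≠ 0) :
    ∃ ν : ℝ, 0 ≤ ν ∧
      (∀ l : Fin (L + 1),
        (p * β l * ‖αstar l‖ ^ p) • αstar l
          + (2 * ν * ‖αstar l‖ ^ 2) • ((Yh αstar - αo) l) = 0) ∧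
      ν * g αstar = 0 ∧ g αstar ≤ 0 := by
  obtain ⟨φ, hφm, hφlim⟩ := hconv
  obtain ⟨l0, hl0, hr0⟩ := hnz
  set t : ℕ → ℝ := fun k => lamseq k * min (max (g (αseq k) / museq k) 0) 1 with htdef
  have ht0 : ∀ k, 0 ≤ t k := fun k =>
    mul_nonneg (hlam k).le (le_min (le_max_right _ _) zero_le_one)
  -- continuity facts
  have hYc : Continuous (Yh : V L → V L) := Yh.continuous_of_finiteDimensional
  have hgc : Continuous g := by
    have hgeq : g = fun α : V L =>
        (inner ℂ α (Yh α) : ℂ).re - 2 * (inner ℂ αo α : ℂ).re + c - ϱ := funext hg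
    rw [hgeq]
    exact (((Complex.continuous_re.comp (continuous_id.inner hYc)).sub
      (continuous_const.mul
        (Complex.continuous_re.comp (continuous_const.inner continuous_id)))).add
      continuous_const).sub continuous_const
  -- subsequence limit facts
  have hφtop : Tendsto φ atTop atTop := hφm.tendsto_atTop
  have hsub : Tendsto (fun j => φ j - 1) atTop atTop := (tendsto_sub_atTop_nat 1).comp hφtop
  have hεφ : Tendsto (fun j => εseq (φ j - 1)) atTop (nhds 0) := hε0.comp hsub
  have hgφ : Tendsto (fun j => g (αseq (φ j))) atTop (nhds (g αstar)) :=
    (hgc.tendsto αstar).comp hφlim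
  have hαl : ∀ l, Tendsto (fun j => αseq (φ j) l) atTop (nhds (αstar l)) :=
    fun l => ((PiLp.continuous_apply 2 _ l).tendsto αstar).comp hφlim
  have hnl : ∀ l, Tendsto (fun j => ‖αseq (φ j) l‖) atTop (nhds ‖αstar l‖) :=
    fun l => (continuous_norm.tendsto _).comp (hαl l)
  have hnpl : ∀ l, Tendsto (fun j => ‖αseq (φ j) l‖ ^ p) atTop (nhds (‖αstar l‖ ^ p)) :=
    fun l => (Real.continuousAt_rpow_const _ p (Or.inr hp0.le)).tendsto.comp (hnl l)
  have hn2l : ∀ l, Tendsto (fun j => ‖αseq (φ j) l‖ ^ 2) atTop (nhds (‖αstar l‖ ^ 2)) :=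
    fun l => (hnl l).pow 2
  have hrl : ∀ l, Tendsto (fun j => (Yh (αseq (φ j)) - αo) l) atTop
      (nhds ((Yh αstar - αo) l)) :=
    fun l => ((PiLp.continuous_apply 2 _ l).tendsto _).comp
      (((hYc.sub continuous_const).tendsto _).comp hφlim)
  -- the step expression tends to zero along the subsequence
  have hF0 : ∀ l, Tendsto (fun j => (p * β l * ‖αseq (φ j) l‖ ^ p) • αseq (φ j) l
      + (2 * t (φ j) * ‖αseq (φ j) l‖ ^ 2) • ((Yh (αseq (φ j)) - αo) l)) atTop (nhds 0) := by
    intro l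
    rw [tendsto_zero_iff_norm_tendsto_zero]
    refine squeeze_zero' (Eventually.of_forall fun j => norm_nonneg _) ?_ hεφ
    filter_upwards [hφtop.eventually_ge_atTop 1] with j hj
    exact hstep (φ j) hj l
  -- a_j and its limit
  have haten : ∀ l, Tendsto (fun j => (p * β l * ‖αseq (φ j) l‖ ^ p) • αseq (φ j) l) atTop
      (nhds ((p * β l * ‖αstar l‖ ^ p) • αstar l)) :=
    fun l => (tendsto_const_nhds.mul (hnpl l)).smul (hαl l)
  -- the w_j vectors and their limit
  have hwne : (2 * ‖αstar l0‖ ^ 2) • ((Yh αstar - αo) l0) ≠ 0 := by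
    have hn : 0 < ‖αstar l0‖ := norm_pos_iff.mpr hl0
    exact smul_ne_zero (by positivity) hr0
  have hwten : Tendsto (fun j => (2 * ‖αseq (φ j) l0‖ ^ 2) • ((Yh (αseq (φ j)) - αo) l0)) atTop
      (nhds ((2 * ‖αstar l0‖ ^ 2) • ((Yh αstar - αo) l0))) :=
    (tendsto_const_nhds.mul (hn2l l0)).smul (hrl l0)
  have htwsub : Tendsto (fun j =>
      ((p * β l0 * ‖αseq (φ j) l0‖ ^ p) • αseq (φ j) l0
        + (2 * t (φ j) * ‖αseq (φ j) l0‖ ^ 2) • ((Yh (αseq (φ j)) - αo) l0))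
      - (p * β l0 * ‖αseq (φ j) l0‖ ^ p) • αseq (φ j) l0) atTop
      (nhds (-((p * β l0 * ‖αstar l0‖ ^ p) • αstar l0))) := by
    have := (hF0 l0).sub (haten l0)
    rwa [zero_sub] at this
  -- definition of ν as a limit
  set ν : ℝ := (inner ℂ ((2 * ‖αstar l0‖ ^ 2) • ((Yh αstar - αo) l0))
      (-((p * β l0 * ‖αstar l0‖ ^ p) • αstar l0)) : ℂ).re
      / ‖(2 * ‖αstar l0‖ ^ 2) • ((Yh αstar - αo) l0)‖ ^ 2 with hνdef
  have hwpos : (0:ℝ) < ‖(2 * ‖αstar l0‖ ^ 2) • ((Yh αstar - αo) l0)‖ :=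
    norm_pos_iff.mpr hwne
  have hnum : Tendsto (fun j =>
      (inner ℂ ((2 * ‖αseq (φ j) l0‖ ^ 2) • ((Yh (αseq (φ j)) - αo) l0))
        (((p * β l0 * ‖αseq (φ j) l0‖ ^ p) • αseq (φ j) l0
          + (2 * t (φ j) * ‖αseq (φ j) l0‖ ^ 2) • ((Yh (αseq (φ j)) - αo) l0))
          - (p * β l0 * ‖αseq (φ j) l0‖ ^ p) • αseq (φ j) l0) : ℂ).re) atTop
      (nhds ((inner ℂ ((2 * ‖αstar l0‖ ^ 2) • ((Yh αstar - αo) l0))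
        (-((p * β l0 * ‖αstar l0‖ ^ p) • αstar l0)) : ℂ).re)) :=
    (Complex.continuous_re.tendsto _).comp (hwten.inner htwsub)
  have hden : Tendsto (fun j => ‖(2 * ‖αseq (φ j) l0‖ ^ 2) • ((Yh (αseq (φ j)) - αo) l0)‖ ^ 2)
      atTop (nhds (‖(2 * ‖αstar l0‖ ^ 2) • ((Yh αstar - αo) l0)‖ ^ 2)) :=
    ((continuous_norm.tendsto _).comp hwten).pow 2
  have hqten := hnum.div hden (by positivity)
  have htν : Tendsto (fun j => t (φ j)) atTop (nhds ν) := by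
    refine hqten.congr' ?_
    filter_upwards [hwten.eventually_ne hwne] with j hj
    simp only [Pi.div_apply]
    have h1 : ((p * β l0 * ‖αseq (φ j) l0‖ ^ p) • αseq (φ j) l0
        + (2 * t (φ j) * ‖αseq (φ j) l0‖ ^ 2) • ((Yh (αseq (φ j)) - αo) l0))
        - (p * β l0 * ‖αseq (φ j) l0‖ ^ p) • αseq (φ j) l0
        = t (φ j) • ((2 * ‖αseq (φ j) l0‖ ^ 2) • ((Yh (αseq (φ j)) - αo) l0)) := by
      rw [add_sub_cancel_left, smul_smul]
      congr 1
      ring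
    rw [h1, ← algebraMap_smul ℂ (t (φ j)), Complex.coe_algebraMap, inner_smul_right,
      Complex.re_ofReal_mul]
    have h3 : ((inner ℂ ((2 * ‖αseq (φ j) l0‖ ^ 2) • ((Yh (αseq (φ j)) - αo) l0))
        ((2 * ‖αseq (φ j) l0‖ ^ 2) • ((Yh (αseq (φ j)) - αo) l0)) : ℂ)).re
        = ‖(2 * ‖αseq (φ j) l0‖ ^ 2) • ((Yh (αseq (φ j)) - αo) l0)‖ ^ 2 := by
      exact inner_self_eq_norm_sq (𝕜 := ℂ)
        ((2 * ‖αseq (φ j) l0‖ ^ 2) • ((Yh (αseq (φ j)) - αo) l0))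
    rw [h3]
    exact mul_div_cancel_right₀ _ (pow_ne_zero 2 (norm_ne_zero_iff.mpr hj))
  have hν0 : 0 ≤ ν := ge_of_tendsto' htν fun j => ht0 (φ j)
  -- stationarity for every l
  have hstat : ∀ l : Fin (L + 1),
      (p * β l * ‖αstar l‖ ^ p) • αstar l
        + (2 * ν * ‖αstar l‖ ^ 2) • ((Yh αstar - αo) l) = 0 := by
    intro l
    have hlim2 : Tendsto (fun j => (p * β l * ‖αseq (φ j) l‖ ^ p) • αseq (φ j) l
        + (2 * t (φ j) * ‖αseq (φ j) l‖ ^ 2) • ((Yh (αseq (φ j)) - αo) l)) atTop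
        (nhds ((p * β l * ‖αstar l‖ ^ p) • αstar l
          + (2 * ν * ‖αstar l‖ ^ 2) • ((Yh αstar - αo) l))) :=
      (haten l).add (((tendsto_const_nhds.mul htν).mul (hn2l l)).smul (hrl l))
    exact tendsto_nhds_unique hlim2 (hF0 l)
  -- Φ is nonnegative
  have hΦ0 : ∀ α : V L, 0 ≤ Φ α := fun α => by
    rw [hΦ]
    exact Finset.sum_nonneg fun l _ =>
      mul_nonneg (hβ l).le (Real.rpow_nonneg (norm_nonneg _) p)
  -- feasibility of the limit
  have hgle : g αstar ≤ 0 := by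
    by_contra hpos
    push_neg at hpos
    have hμφ : Tendsto (fun j => museq (φ j - 1)) atTop (nhds 0) := hmu0.comp hsub
    have hlamphi : Tendsto (fun j => lamseq (φ j - 1)) atTop atTop := hlamtop.comp hsub
    have e1 : ∀ᶠ j in atTop, g αstar / 2 < g (αseq (φ j)) :=
      hgφ.eventually (eventually_gt_nhds (by linarith))
    have e2 : ∀ᶠ j in atTop, museq (φ j - 1) < g αstar / 2 :=
      hμφ.eventually (eventually_lt_nhds (by linarith))
    have e3 : ∀ᶠ j in atTop, 4 * Φ αt / g αstar < lamseq (φ j - 1) :=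
      hlamphi.eventually_gt_atTop _
    have e4 : ∀ᶠ j in atTop, 1 ≤ φ j := hφtop.eventually_ge_atTop 1
    obtain ⟨j, ⟨h1, h2⟩, h3, h4⟩ := ((e1.and e2).and (e3.and e4)).exists
    have hk : φ j - 1 + 1 = φ j := Nat.succ_pred_eq_of_pos h4
    have hd := hdesc (φ j - 1)
    rw [hk] at hd
    have hfv : f (lamseq (φ j - 1)) (museq (φ j - 1)) (αseq (φ j)) =
        lamseq (φ j - 1) * g (αseq (φ j)) - lamseq (φ j - 1) * museq (φ j - 1) / 2 :=
      hftop _ _ _ (by linarith)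
    rw [hfv] at hd
    have hΦk := hΦ0 (αseq (φ j))
    have hlampos := hlam (φ j - 1)
    have f1 := mul_lt_mul_of_pos_left h1 hlampos
    have f2 := mul_lt_mul_of_pos_left h2 hlampos
    have f3 := mul_lt_mul_of_pos_right h3 hpos
    have f4 : 4 * Φ αt / g αstar * g αstar = 4 * Φ αt :=
      div_mul_cancel₀ _ (ne_of_gt hpos)
    nlinarith
  -- complementary slackness
  have hνg : ν * g αstar = 0 := by
    rcases lt_or_eq_of_le hgle with hlt | heq0
    · have e1 : ∀ᶠ j in atTop, g (αseq (φ j)) < 0 :=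
        hgφ.eventually (eventually_lt_nhds hlt)
      have ht00 : ∀ᶠ j in atTop, (0:ℝ) = t (φ j) := by
        filter_upwards [e1] with j hj
        have hneg : g (αseq (φ j)) / museq (φ j) < 0 := div_neg_of_neg_of_pos hj (hmu _)
        show (0:ℝ) = lamseq (φ j) * min (max (g (αseq (φ j)) / museq (φ j)) 0) 1
        rw [max_eq_right hneg.le, min_eq_left zero_le_one, mul_zero]
      have : ν = 0 := tendsto_nhds_unique htν (Tendsto.congr' ht00 tendsto_const_nhds)
      rw [this, zero_mul]
    · rw [heq0, mul_zero]
  exact ⟨ν, hν0, hstat, hνg, hgle⟩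
end
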